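/- arXiv:1102.3130 — 8 statements merged into one kernel-verified Lean document; each statement's English description precedes it below -/
import Mathlib

section
/- Let T be the 10×10 real symmetric matrix whose rows and columns are indexed by the 2-element subsets of {1,2,3,4,5}, with entries T(s,s) = -4, T(s,t) = 7/2 if s and t share exactly one element, and T(s,t) = -9 if s and t are disjoint. Then the characteristic polynomial of T is (X + 10)·(X + 20)^5·(X - 35/2)^4; equivalently, the eigenvalues of T are -10 with multiplicity 1, -20 with multiplicity 5, and 35/2 with multiplicity 4. -/
open Polynomial

/-- The 10×10 real symmetric matrix indexed by 2-element subsets of {1,…,5},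
with `-4` on the diagonal, `7/2` when the two subsets share exactly one element,
and `-9` when they are disjoint. -/
noncomputable def HessianMatrix :
    Matrix {s : Finset (Fin 5) // s.card = 2} {s : Finset (Fin 5) // s.card = 2} ℝ :=
  fun s t =>
    if (s.1 ∩ t.1).card = 2 then -4
    else if (s.1 ∩ t.1).card = 1 then 7/2
    else -9

section consLemmas
variable {α : Type*}
@[simp] lemma consEval_2_1 (a : α) (u : Fin 1 → α) : Matrix.vecCons a u (1 : Fin 2) = u 0 := rfl
@[simp] lemma consEval_3_1 (a : α) (u : Fin 2 → α) : Matrix.vecCons a u (1 : Fin 3) = u 0 := rfl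
@[simp] lemma consEval_3_2 (a : α) (u : Fin 2 → α) : Matrix.vecCons a u (2 : Fin 3) = u 1 := rfl
@[simp] lemma consEval_4_1 (a : α) (u : Fin 3 → α) : Matrix.vecCons a u (1 : Fin 4) = u 0 := rfl
@[simp] lemma consEval_4_2 (a : α) (u : Fin 3 → α) : Matrix.vecCons a u (2 : Fin 4) = u 1 := rfl
@[simp] lemma consEval_4_3 (a : α) (u : Fin 3 → α) : Matrix.vecCons a u (3 : Fin 4) = u 2 := rfl
@[simp] lemma consEval_5_1 (a : α) (u : Fin 4 → α) : Matrix.vecCons a u (1 : Fin 5) = u 0 := rfl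
@[simp] lemma consEval_5_2 (a : α) (u : Fin 4 → α) : Matrix.vecCons a u (2 : Fin 5) = u 1 := rfl
@[simp] lemma consEval_5_3 (a : α) (u : Fin 4 → α) : Matrix.vecCons a u (3 : Fin 5) = u 2 := rfl
@[simp] lemma consEval_5_4 (a : α) (u : Fin 4 → α) : Matrix.vecCons a u (4 : Fin 5) = u 3 := rfl
@[simp] lemma consEval_6_1 (a : α) (u : Fin 5 → α) : Matrix.vecCons a u (1 : Fin 6) = u 0 := rfl
@[simp] lemma consEval_6_2 (a : α) (u : Fin 5 → α) : Matrix.vecCons a u (2 : Fin 6) = u 1 := rfl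
@[simp] lemma consEval_6_3 (a : α) (u : Fin 5 → α) : Matrix.vecCons a u (3 : Fin 6) = u 2 := rfl
@[simp] lemma consEval_6_4 (a : α) (u : Fin 5 → α) : Matrix.vecCons a u (4 : Fin 6) = u 3 := rfl
@[simp] lemma consEval_6_5 (a : α) (u : Fin 5 → α) : Matrix.vecCons a u (5 : Fin 6) = u 4 := rfl
@[simp] lemma consEval_7_1 (a : α) (u : Fin 6 → α) : Matrix.vecCons a u (1 : Fin 7) = u 0 := rfl
@[simp] lemma consEval_7_2 (a : α) (u : Fin 6 → α) : Matrix.vecCons a u (2 : Fin 7) = u 1 := rfl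
@[simp] lemma consEval_7_3 (a : α) (u : Fin 6 → α) : Matrix.vecCons a u (3 : Fin 7) = u 2 := rfl
@[simp] lemma consEval_7_4 (a : α) (u : Fin 6 → α) : Matrix.vecCons a u (4 : Fin 7) = u 3 := rfl
@[simp] lemma consEval_7_5 (a : α) (u : Fin 6 → α) : Matrix.vecCons a u (5 : Fin 7) = u 4 := rfl
@[simp] lemma consEval_7_6 (a : α) (u : Fin 6 → α) : Matrix.vecCons a u (6 : Fin 7) = u 5 := rfl
@[simp] lemma consEval_8_1 (a : α) (u : Fin 7 → α) : Matrix.vecCons a u (1 : Fin 8) = u 0 := rfl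
@[simp] lemma consEval_8_2 (a : α) (u : Fin 7 → α) : Matrix.vecCons a u (2 : Fin 8) = u 1 := rfl
@[simp] lemma consEval_8_3 (a : α) (u : Fin 7 → α) : Matrix.vecCons a u (3 : Fin 8) = u 2 := rfl
@[simp] lemma consEval_8_4 (a : α) (u : Fin 7 → α) : Matrix.vecCons a u (4 : Fin 8) = u 3 := rfl
@[simp] lemma consEval_8_5 (a : α) (u : Fin 7 → α) : Matrix.vecCons a u (5 : Fin 8) = u 4 := rfl
@[simp] lemma consEval_8_6 (a : α) (u : Fin 7 → α) : Matrix.vecCons a u (6 : Fin 8) = u 5 := rfl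
@[simp] lemma consEval_8_7 (a : α) (u : Fin 7 → α) : Matrix.vecCons a u (7 : Fin 8) = u 6 := rfl
@[simp] lemma consEval_9_1 (a : α) (u : Fin 8 → α) : Matrix.vecCons a u (1 : Fin 9) = u 0 := rfl
@[simp] lemma consEval_9_2 (a : α) (u : Fin 8 → α) : Matrix.vecCons a u (2 : Fin 9) = u 1 := rfl
@[simp] lemma consEval_9_3 (a : α) (u : Fin 8 → α) : Matrix.vecCons a u (3 : Fin 9) = u 2 := rfl
@[simp] lemma consEval_9_4 (a : α) (u : Fin 8 → α) : Matrix.vecCons a u (4 : Fin 9) = u 3 := rfl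
@[simp] lemma consEval_9_5 (a : α) (u : Fin 8 → α) : Matrix.vecCons a u (5 : Fin 9) = u 4 := rfl
@[simp] lemma consEval_9_6 (a : α) (u : Fin 8 → α) : Matrix.vecCons a u (6 : Fin 9) = u 5 := rfl
@[simp] lemma consEval_9_7 (a : α) (u : Fin 8 → α) : Matrix.vecCons a u (7 : Fin 9) = u 6 := rfl
@[simp] lemma consEval_9_8 (a : α) (u : Fin 8 → α) : Matrix.vecCons a u (8 : Fin 9) = u 7 := rfl
@[simp] lemma consEval_10_1 (a : α) (u : Fin 9 → α) : Matrix.vecCons a u (1 : Fin 10) = u 0 := rfl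
@[simp] lemma consEval_10_2 (a : α) (u : Fin 9 → α) : Matrix.vecCons a u (2 : Fin 10) = u 1 := rfl
@[simp] lemma consEval_10_3 (a : α) (u : Fin 9 → α) : Matrix.vecCons a u (3 : Fin 10) = u 2 := rfl
@[simp] lemma consEval_10_4 (a : α) (u : Fin 9 → α) : Matrix.vecCons a u (4 : Fin 10) = u 3 := rfl
@[simp] lemma consEval_10_5 (a : α) (u : Fin 9 → α) : Matrix.vecCons a u (5 : Fin 10) = u 4 := rfl
@[simp] lemma consEval_10_6 (a : α) (u : Fin 9 → α) : Matrix.vecCons a u (6 : Fin 10) = u 5 := rfl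
@[simp] lemma consEval_10_7 (a : α) (u : Fin 9 → α) : Matrix.vecCons a u (7 : Fin 10) = u 6 := rfl
@[simp] lemma consEval_10_8 (a : α) (u : Fin 9 → α) : Matrix.vecCons a u (8 : Fin 10) = u 7 := rfl
@[simp] lemma consEval_10_9 (a : α) (u : Fin 9 → α) : Matrix.vecCons a u (9 : Fin 10) = u 8 := rfl
end consLemmas
/-- charpoly is invariant under conjugation. -/
theorem charpoly_similar' {n R : Type*} [CommRing R] [Fintype n] [DecidableEq n]
    (M P Q : Matrix n n R) (hPQ : P * Q = 1) :
    (P * M * Q).charpoly = M.charpoly := by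
  have hs : ∀ A : Matrix n n R[X], A * Matrix.scalar n (X : R[X]) = Matrix.scalar n X * A := by
    intro A; ext i j
    simp [Matrix.scalar, Matrix.mul_diagonal, Matrix.diagonal_mul, mul_comm]
  have key : (P.map C) * Matrix.charmatrix M * (Q.map C) = Matrix.charmatrix (P * M * Q) := by
    simp only [Matrix.charmatrix, RingHom.mapMatrix_apply]
    rw [Matrix.mul_sub, Matrix.sub_mul, ← Matrix.map_mul, ← Matrix.map_mul, hs (P.map C)]
    congr 1
    rw [Matrix.mul_assoc, ← Matrix.map_mul, hPQ, Matrix.map_one _ (map_zero C) (map_one C),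
      mul_one]
  have hdet : (P.map (C : R →+* R[X])).det * (Q.map C).det = 1 := by
    rw [← Matrix.det_mul, ← Matrix.map_mul, hPQ, Matrix.map_one _ (map_zero C) (map_one C),
      Matrix.det_one]
  rw [Matrix.charpoly, ← key, Matrix.det_mul, Matrix.det_mul, Matrix.charpoly]
  calc (P.map (C : R →+* R[X])).det * (Matrix.charmatrix M).det * (Q.map C).det
      = (Matrix.charmatrix M).det * ((P.map C).det * (Q.map C).det) := by ring
    _ = (Matrix.charmatrix M).det := by rw [hdet, mul_one]

/-- charpoly of a diagonal matrix. -/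
theorem charpoly_diag' {n R : Type*} [CommRing R] [Fintype n] [DecidableEq n] (d : n → R) :
    (Matrix.diagonal d).charpoly = ∏ i, (X - C (d i)) := by
  have h : Matrix.charmatrix (Matrix.diagonal d) = Matrix.diagonal fun i => X - C (d i) := by
    ext i j
    by_cases hij : i = j
    · subst hij; simp
    · simp [hij, Matrix.diagonal_apply_ne _ hij]
  rw [Matrix.charpoly, h, Matrix.det_diagonal]
def pairList : Fin 10 → Finset (Fin 5) :=
  ![{0,1},{0,2},{0,3},{0,4},{1,2},{1,3},{1,4},{2,3},{2,4},{3,4}]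

lemma pairList_card : ∀ i, (pairList i).card = 2 := by decide

def fsub : Fin 10 → {s : Finset (Fin 5) // s.card = 2} := fun i => ⟨pairList i, pairList_card i⟩

lemma fsub_bij : Function.Bijective fsub := by decide

noncomputable def subEquiv : {s : Finset (Fin 5) // s.card = 2} ≃ Fin 10 :=
  (Equiv.ofBijective fsub fsub_bij).symm

def adj1 : Fin 10 → Fin 10 → Bool := fun i j => (pairList i ∩ pairList j).card = 1

lemma fsub_val (i : Fin 10) : (fsub i).1 = pairList i := rfl

lemma c2 : ∀ i j : Fin 10, (pairList i ∩ pairList j).card = 2 ↔ i = j := by decide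
lemma c1 : ∀ i j : Fin 10, (pairList i ∩ pairList j).card = 1 ↔ adj1 i j := by decide

noncomputable def Hc : Matrix (Fin 10) (Fin 10) ℝ := fun i j =>
  if i = j then -4 else if adj1 i j then 7/2 else -9

lemma hHc : Matrix.reindex subEquiv subEquiv HessianMatrix = Hc := by
  ext i j
  show HessianMatrix (fsub i) (fsub j) = Hc i j
  simp only [HessianMatrix, Hc, fsub_val, c2, c1]

def Hz : Matrix (Fin 10) (Fin 10) ℤ := fun i j =>
  if i = j then -8 else if adj1 i j then 7 else -18

def HzL : Matrix (Fin 10) (Fin 10) ℤ :=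
  !![-8, 7, 7, 7, 7, 7, 7, -18, -18, -18;
    7, -8, 7, 7, 7, -18, -18, 7, 7, -18;
    7, 7, -8, 7, -18, 7, -18, 7, -18, 7;
    7, 7, 7, -8, -18, -18, 7, -18, 7, 7;
    7, 7, -18, -18, -8, 7, 7, 7, 7, -18;
    7, -18, 7, -18, 7, -8, 7, 7, -18, 7;
    7, -18, -18, 7, 7, 7, -8, -18, 7, 7;
    -18, 7, 7, -18, 7, 7, -18, -8, 7, 7;
    -18, 7, -18, 7, 7, -18, 7, 7, -8, 7;
    -18, -18, 7, 7, -18, 7, 7, 7, 7, -8]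

lemma hHz : Hz = HzL := by decide

lemma hHcZ : Hc = HzL.map (fun z : ℤ => (z : ℝ)/2) := by
  rw [← hHz]
  ext i j
  simp only [Hc, Hz, Matrix.map_apply, apply_ite (fun z : ℤ => (z : ℝ)/2)]
  norm_num

noncomputable def Pr : Matrix (Fin 10) (Fin 10) ℝ :=
  !![1, 1, 1, 0, 0, 0, 0, 1, 1, 1;
    1, 1, 0, 1, 0, 1, 1, 0, 0, 1;
    1, 1, 0, 0, 1, -1, 0, -1, 0, -1;
    1, 0, -1, -1, -1, 0, -1, 0, -1, -1;
    1, 0, 1, 1, 0, -1, -1, -1, -1, -1;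
    1, 0, 1, 0, 1, 1, 0, 0, 0, 0;
    1, -1, 0, -1, -1, 0, 1, 0, 0, 0;
    1, 0, 0, 1, 1, 0, 0, 1, 0, 0;
    1, -1, -1, 0, -1, 0, 0, 0, 1, 0;
    1, -1, -1, -1, 0, 0, 0, 0, 0, 1]

noncomputable def Qr : Matrix (Fin 10) (Fin 10) ℝ :=
  !![(1/10), (1/10), (1/10), (1/10), (1/10), (1/10), (1/10), (1/10), (1/10), (1/10);
    (1/5), (1/5), (1/5), (1/5), (-2/15), (-2/15), (-2/15), (-2/15), (-2/15), (-2/15);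
    (1/5), (-2/15), (-2/15), (-2/15), (1/5), (1/5), (1/5), (-2/15), (-2/15), (-2/15);
    (-2/15), (1/5), (-2/15), (-2/15), (1/5), (-2/15), (-2/15), (1/5), (1/5), (-2/15);
    (-2/15), (-2/15), (1/5), (-2/15), (-2/15), (1/5), (-2/15), (1/5), (-2/15), (1/5);
    (-1/6), (1/6), (-1/6), (1/6), (-1/6), (1/2), (-1/6), (-1/6), (1/6), (-1/6);
    (-1/6), (1/6), (1/6), (-1/6), (-1/6), (-1/6), (1/2), (1/6), (-1/6), (-1/6);
    (1/6), (-1/6), (-1/6), (1/6), (-1/6), (-1/6), (1/6), (1/2), (-1/6), (-1/6);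
    (1/6), (-1/6), (1/6), (-1/6), (-1/6), (1/6), (-1/6), (-1/6), (1/2), (-1/6);
    (1/6), (1/6), (-1/6), (-1/6), (1/6), (-1/6), (-1/6), (-1/6), (-1/6), (1/2)]

noncomputable def dr : Fin 10 → ℝ := ![-10, 35/2, 35/2, 35/2, 35/2, -20, -20, -20, -20, -20]

set_option maxHeartbeats 4000000 in
lemma hPQ : Pr * Qr = 1 := by
  ext i j
  rw [Matrix.mul_apply]
  fin_cases i <;> fin_cases j <;>
    · simp [Fin.sum_univ_succ, Pr, Qr, Matrix.one_apply, Matrix.vecHead, Matrix.vecTail]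
      try norm_num

set_option maxHeartbeats 4000000 in
lemma hHP : (HzL.map fun z : ℤ => (z : ℝ)/2) * Pr = Pr * Matrix.diagonal dr := by
  ext i j
  rw [Matrix.mul_apply, Matrix.mul_diagonal]
  fin_cases i <;> fin_cases j <;>
    · simp [Fin.sum_univ_succ, Matrix.map_apply, HzL, Pr, dr, Matrix.vecHead, Matrix.vecTail]
      try norm_num

theorem charpoly_hessianMatrix :
    HessianMatrix.charpoly =
      (X + C (10 : ℝ)) * (X + C (20 : ℝ)) ^ 5 * (X - C (35/2 : ℝ)) ^ 4 := by
  rw [← Matrix.charpoly_reindex subEquiv HessianMatrix, hHc, hHcZ]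
  have hfact : (HzL.map fun z : ℤ => (z : ℝ)/2) = Pr * Matrix.diagonal dr * Qr := by
    calc (HzL.map fun z : ℤ => (z : ℝ)/2)
        = (HzL.map fun z : ℤ => (z : ℝ)/2) * (Pr * Qr) := by rw [hPQ, mul_one]
      _ = (HzL.map fun z : ℤ => (z : ℝ)/2) * Pr * Qr := by rw [mul_assoc]
      _ = Pr * Matrix.diagonal dr * Qr := by rw [hHP]
  rw [hfact, charpoly_similar' _ _ _ hPQ, charpoly_diag']
  simp [Fin.prod_univ_succ, dr, Matrix.vecHead, Matrix.vecTail, map_neg]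
  ring
end

section
/- Let T be the 10×10 real symmetric matrix whose rows and columns are indexed by the 2-element subsets of {1,2,3,4,5}, with entries T(s,s) = -4, T(s,t) = 7/2 if s and t share exactly one element, and T(s,t) = -9 if s and t are disjoint. Then T, viewed as a quadratic form on ℝ^10, has exactly 4 positive eigenvalues and exactly 6 negative eigenvalues (counted with multiplicity); in particular its signature (number of positive minus number of negative eigenvalues) equals -2. -/
namespace HessianAux

abbrev ι := {s : Finset (Fin 5) // s.card = 2}

/-- Integer matrix equal to `2 • HessianMatrix`. -/
def M : Matrix ι ι ℤ := fun s t =>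
  if (s.1 ∩ t.1).card = 2 then -8
  else if (s.1 ∩ t.1).card = 1 then 7
  else -18

lemma hM_trace : M.trace = -80 := by decide

lemma hMM_trace : (M * M).trace = 13300 := by decide

set_option maxHeartbeats 1000000 in
lemma hM_poly : (M + (20:ℤ) • 1) * (M - (35:ℤ) • 1) * (M + (40:ℤ) • 1) = 0 := by decide

lemma card_ι : Fintype.card ι = 10 := by decide

lemma map_mul' (A B : Matrix ι ι ℤ) :
    (A * B).map (Int.cast : ℤ → ℝ) = A.map Int.cast * B.map Int.cast :=
  Matrix.map_mul (f := Int.castRingHom ℝ)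

/-- Casting `M` to the reals gives `2 • HessianMatrix`. -/
lemma hMap : M.map (Int.cast : ℤ → ℝ) = (2 : ℝ) • HessianMatrix := by
  ext s t
  simp only [Matrix.map_apply, Matrix.smul_apply, M, HessianMatrix, smul_eq_mul]
  split_ifs <;> norm_num

lemma map_smul_one (a : ℤ) :
    ((a • (1 : Matrix ι ι ℤ)).map (Int.cast : ℤ → ℝ)) = ((a : ℝ) • 1 : Matrix ι ι ℝ) := by
  rw [Matrix.smul_one_eq_diagonal, Matrix.diagonal_map (by simp),
    Matrix.smul_one_eq_diagonal]

lemma map_add_smul (a : ℤ) :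
    (M + a • 1).map (Int.cast : ℤ → ℝ) =
      (2 : ℝ) • HessianMatrix + (a : ℝ) • 1 := by
  rw [Matrix.map_add (Int.cast : ℤ → ℝ) (by push_cast; simp), hMap, map_smul_one]

lemma map_sub_smul (a : ℤ) :
    (M - a • 1).map (Int.cast : ℤ → ℝ) =
      (2 : ℝ) • HessianMatrix - (a : ℝ) • 1 := by
  rw [Matrix.map_sub (Int.cast : ℤ → ℝ) (by push_cast; simp), hMap, map_smul_one]

/-- The real polynomial identity satisfied by `HessianMatrix`. -/
lemma key_poly :
    ((2:ℝ) • HessianMatrix + (20:ℝ) • 1) * ((2:ℝ) • HessianMatrix - (35:ℝ) • 1) *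
      ((2:ℝ) • HessianMatrix + (40:ℝ) • 1) = 0 := by
  have h : ((M + (20:ℤ) • 1) * (M - (35:ℤ) • 1) * (M + (40:ℤ) • 1)).map (Int.cast : ℤ → ℝ)
      = (0 : Matrix ι ι ℤ).map (Int.cast : ℤ → ℝ) := by rw [hM_poly]
  rw [map_mul', map_mul', map_add_smul, map_sub_smul, map_add_smul,
    Matrix.map_zero _ (by simp)] at h
  norm_num at h
  exact h

lemma trace_T : HessianMatrix.trace = -40 := by
  have h1 : (M.map (Int.cast : ℤ → ℝ)).trace = ((M.trace : ℤ) : ℝ) := by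
    simp [Matrix.trace, Matrix.diag, Matrix.map_apply]
  rw [hMap, Matrix.trace_smul, hM_trace] at h1
  push_cast at h1
  rw [smul_eq_mul] at h1
  linarith

lemma trace_TT : (HessianMatrix * HessianMatrix).trace = 3325 := by
  have h1 : ((M * M).map (Int.cast : ℤ → ℝ)).trace = (((M * M).trace : ℤ) : ℝ) := by
    simp [Matrix.trace, Matrix.diag, Matrix.map_apply]
  rw [map_mul', hMap, hMM_trace, smul_mul_assoc, mul_smul_comm,
    Matrix.trace_smul, Matrix.trace_smul] at h1
  push_cast at h1
  rw [smul_eq_mul, smul_eq_mul] at h1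
  linarith

end HessianAux

open Matrix in
theorem signature_hessianMatrix (hT : HessianMatrix.IsHermitian) :
    (Finset.univ.filter fun i => 0 < hT.eigenvalues i).card = 4 ∧
    (Finset.univ.filter fun i => hT.eigenvalues i < 0).card = 6 ∧
    ((Finset.univ.filter fun i => 0 < hT.eigenvalues i).card : ℤ) -
      ((Finset.univ.filter fun i => hT.eigenvalues i < 0).card : ℤ) = -2 := by
  classical
  set f := hT.eigenvalues with hf
  -- Step 1: every eigenvalue is -10, 35/2 or -20
  have hmem : ∀ i, f i = -10 ∨ f i = 35/2 ∨ f i = -20 := by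
    intro i
    have hv := hT.mulVec_eigenvectorBasis i
    set v : HessianAux.ι → ℝ := ⇑(hT.eigenvectorBasis i) with hvdef
    have hvne : v ≠ 0 := by
      intro h
      exact hT.eigenvectorBasis.orthonormal.ne_zero i (by ext x; exact congrFun h x)
    have step : ∀ (a c : ℝ),
        ((2:ℝ) • HessianMatrix + a • 1) *ᵥ (c • v) = (c * (2 * f i + a)) • v := by
      intro a c
      rw [Matrix.mulVec_smul, Matrix.add_mulVec, Matrix.smul_mulVec,
        Matrix.smul_mulVec, Matrix.one_mulVec, hv]
      ext x
      simp only [Pi.smul_apply, Pi.add_apply, smul_eq_mul]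
      ring
    have step' : ∀ (a c : ℝ),
        ((2:ℝ) • HessianMatrix - a • 1) *ᵥ (c • v) = (c * (2 * f i - a)) • v := by
      intro a c
      rw [Matrix.mulVec_smul, Matrix.sub_mulVec, Matrix.smul_mulVec,
        Matrix.smul_mulVec, Matrix.one_mulVec, hv]
      ext x
      simp only [Pi.smul_apply, Pi.sub_apply, smul_eq_mul]
      ring
    have hzero : ((2 * f i + 40) * (2 * f i - 35) * (2 * f i + 20)) • v = 0 := by
      have h := congrArg (fun N => N *ᵥ v) HessianAux.key_poly
      simp only [Matrix.zero_mulVec] at h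
      rw [← Matrix.mulVec_mulVec, ← Matrix.mulVec_mulVec] at h
      have e1 : ((2:ℝ) • HessianMatrix + (40:ℝ) • 1) *ᵥ v = (1 * (2 * f i + 40)) • v := by
        have := step 40 1
        rwa [one_smul] at this
      rw [e1, step' 35 _, step 20 _] at h
      rw [← h]
      congr 1
      ring
    have hsc : (2 * f i + 40) * (2 * f i - 35) * (2 * f i + 20) = 0 := by
      by_contra h
      exact hvne ((smul_eq_zero.mp hzero).resolve_left h)
    rcases mul_eq_zero.mp hsc with h | h
    · rcases mul_eq_zero.mp h with h | h
      · right; right; linarith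
      · right; left; linarith
    · left; linarith
  -- Step 2: trace identities via the spectral theorem
  set U : Matrix HessianAux.ι HessianAux.ι ℝ := ↑hT.eigenvectorUnitary with hU
  have hU1 : U * star U = 1 := Matrix.mem_unitaryGroup_iff.mp hT.eigenvectorUnitary.2
  have hdiag : star U * HessianMatrix * U = Matrix.diagonal f := by
    have h := hT.conjStarAlgAut_star_eigenvectorUnitary
    rw [Unitary.conjStarAlgAut_star_apply] at h
    rw [RCLike.ofReal_real_eq_id] at h
    simpa using h
  have htr : ∑ i, f i = -40 := by
    have h : (star U * HessianMatrix * U).trace = HessianMatrix.trace := by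
      rw [Matrix.trace_mul_cycle, hU1, Matrix.one_mul]
    rw [hdiag, Matrix.trace_diagonal] at h
    rw [h, HessianAux.trace_T]
  have htr2 : ∑ i, (f i)^2 = 3325 := by
    have hsq : star U * (HessianMatrix * HessianMatrix) * U
        = Matrix.diagonal f * Matrix.diagonal f := by
      rw [← hdiag]
      calc star U * (HessianMatrix * HessianMatrix) * U
          = star U * HessianMatrix * (U * star U) * HessianMatrix * U := by
            rw [hU1]; noncomm_ring
        _ = star U * HessianMatrix * U * (star U * HessianMatrix * U) := by noncomm_ring
    have h1 : (star U * (HessianMatrix * HessianMatrix) * U).trace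
        = (HessianMatrix * HessianMatrix).trace := by
      rw [Matrix.trace_mul_cycle, hU1, Matrix.one_mul]
    rw [hsq, Matrix.diagonal_mul_diagonal, Matrix.trace_diagonal,
      HessianAux.trace_TT] at h1
    rw [← h1]
    apply Finset.sum_congr rfl
    intro i _
    simp [sq]
  -- Step 3: counting
  have hcard : (Finset.univ : Finset HessianAux.ι).card = 10 := by
    rw [Finset.card_univ, HessianAux.card_ι]
  set A := Finset.univ.filter fun i => f i = 35/2 with hA
  have hPA : (Finset.univ.filter fun i => 0 < f i) = A := by
    apply Finset.filter_congr
    intro i _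
    rcases hmem i with h | h | h <;> rw [h] <;> norm_num
  have hconst : ∀ i ∈ A, (f i + 10) * (f i + 20) = 4125/4 := by
    intro i hi
    rw [hA, Finset.mem_filter] at hi
    rw [hi.2]; norm_num
  have hsumA : ∑ i ∈ A, ((f i + 10) * (f i + 20)) = (A.card : ℝ) * (4125/4) := by
    rw [Finset.sum_congr rfl hconst, Finset.sum_const, nsmul_eq_mul]
  have hsumAc : ∑ i ∈ Finset.univ.filter (fun i => ¬ f i = 35/2),
      ((f i + 10) * (f i + 20)) = 0 := by
    apply Finset.sum_eq_zero
    intro i hi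
    rw [Finset.mem_filter] at hi
    rcases hmem i with h | h | h
    · rw [h]; ring
    · exact absurd h hi.2
    · rw [h]; ring
  have htot : ∑ i, ((f i + 10) * (f i + 20)) = 4125 := by
    have expand : ∀ i ∈ (Finset.univ : Finset HessianAux.ι),
        (f i + 10) * (f i + 20) = (f i)^2 + 30 * f i + 200 := by
      intro i _; ring
    rw [Finset.sum_congr rfl expand, Finset.sum_add_distrib, Finset.sum_add_distrib,
      htr2, ← Finset.mul_sum, htr, Finset.sum_const, hcard]
    norm_num
  have hAcard : A.card = 4 := by
    have split := Finset.sum_filter_add_sum_filter_not Finset.univ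
      (fun i => f i = 35/2) (fun i => (f i + 10) * (f i + 20))
    rw [htot] at split
    rw [← hA] at split
    rw [hsumA, hsumAc, add_zero] at split
    have h4 : (A.card : ℝ) = 4 := by linarith
    exact_mod_cast h4
  have hP : (Finset.univ.filter fun i => 0 < f i).card = 4 := by rw [hPA, hAcard]
  have hNP : (Finset.univ.filter fun i => f i < 0)
      = Finset.univ \ (Finset.univ.filter fun i => 0 < f i) := by
    rw [← Finset.filter_not]
    apply Finset.filter_congr
    intro i _
    rcases hmem i with h | h | h <;> rw [h] <;> norm_num
  have hN : (Finset.univ.filter fun i => f i < 0).card = 6 := by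
    rw [hNP, Finset.card_sdiff_of_subset (Finset.filter_subset _ _), hP, hcard]
  refine ⟨hP, hN, ?_⟩
  rw [hP, hN]
  norm_num
end

section
/- Let T be the 10×10 real symmetric matrix whose rows and columns are indexed by the 2-element subsets of {1,2,3,4,5}, with entries T(s,s) = -4, T(s,t) = 7/2 if s and t share exactly one element, and T(s,t) = -9 if s and t are disjoint. Then det T = 3001250000000 (i.e. det T = (-10)·(-20)^5·(35/2)^4). -/
/-- Integer matrix equal to twice the Hessian matrix. -/
def Az : Matrix {s : Finset (Fin 5) // s.card = 2} {s : Finset (Fin 5) // s.card = 2} ℤ :=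
  fun s t =>
    if (s.1 ∩ t.1).card = 2 then -8
    else if (s.1 ∩ t.1).card = 1 then 7
    else -18

def vH : Fin 10 → {s : Finset (Fin 5) // s.card = 2} :=
  ![⟨{0,1}, by decide⟩, ⟨{0,2}, by decide⟩, ⟨{0,3}, by decide⟩, ⟨{0,4}, by decide⟩,
    ⟨{1,2}, by decide⟩, ⟨{1,3}, by decide⟩, ⟨{1,4}, by decide⟩, ⟨{2,3}, by decide⟩,
    ⟨{2,4}, by decide⟩, ⟨{3,4}, by decide⟩]

lemma vH_bij : Function.Bijective vH := by decide

def Aexp : Matrix (Fin 10) (Fin 10) ℤ :=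
!![-8, 7, 7, 7, 7, 7, 7, -18, -18, -18;
  7, -8, 7, 7, 7, -18, -18, 7, 7, -18;
  7, 7, -8, 7, -18, 7, -18, 7, -18, 7;
  7, 7, 7, -8, -18, -18, 7, -18, 7, 7;
  7, 7, -18, -18, -8, 7, 7, 7, 7, -18;
  7, -18, 7, -18, 7, -8, 7, 7, -18, 7;
  7, -18, -18, 7, 7, 7, -8, -18, 7, 7;
  -18, 7, 7, -18, 7, 7, -18, -8, 7, 7;
  -18, 7, -18, 7, 7, -18, 7, 7, -8, 7;
  -18, -18, 7, 7, -18, 7, 7, 7, 7, -8]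

def Kz : Matrix (Fin 10) (Fin 10) ℤ :=
!![1, 0, 0, 0, 0, 0, 0, 0, 0, 0;
  7, 8, 0, 0, 0, 0, 0, 0, 0, 0;
  7, 7, 1, 0, 0, 0, 0, 0, 0, 0;
  -7, -7, -7, 6, 0, 0, 0, 0, 0, 0;
  49, 49, -16, -16, 39, 0, 0, 0, 0, 0;
  392, -83, 347, -128, 27, 285, 0, 0, 0, 0;
  392, -83, -83, 302, 27, 27, 258, 0, 0, 0;
  94, 9, 9, 64, 9, 9, 64, 22, 0, 0;
  94, 9, 79, -6, 9, 79, -6, -6, 28, 0;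
  47, 47, -3, -3, 47, -3, -3, -3, -3, 17]

def Uz : Matrix (Fin 10) (Fin 10) ℤ :=
!![-8, 7, 7, 7, 7, 7, 7, -18, -18, -18;
  0, -15, 105, 105, 105, -95, -95, -70, -70, -270;
  0, 0, 90, 105, 80, -70, -95, -70, -95, -245;
  0, 0, 0, -195, -80, -80, 245, -80, 245, 245;
  0, 0, 0, 0, 950, -90, -90, -90, -90, -2690;
  0, 0, 0, 0, 0, 6880, -720, -720, -19720, -2520;
  0, 0, 0, 0, 0, 0, 6160, -17920, -2520, -2520;
  0, 0, 0, 0, 0, 0, 0, -3920, -840, -840;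
  0, 0, 0, 0, 0, 0, 0, 0, -4760, -840;
  0, 0, 0, 0, 0, 0, 0, 0, 0, -2800]

lemma Az_submatrix : Az.submatrix vH vH = Aexp := by decide

lemma KA_eq_U : Kz * Aexp = Uz := by decide

lemma Kz_lower : Kz.BlockTriangular OrderDual.toDual := by
  have h : ∀ i j : Fin 10, (j : ℕ) < (i : ℕ) → Kz j i = 0 := by decide
  intro i j hij
  exact h j i hij

lemma Uz_upper : Uz.BlockTriangular id := by
  have h : ∀ i j : Fin 10, (j : ℕ) < (i : ℕ) → Uz i j = 0 := by
    exact @of_decide_eq_true _ (@Nat.decidableForallFin 10 _ (fun i => inferInstance)) rfl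
  intro i j hij
  exact h i j hij

set_option maxRecDepth 4000 in
lemma Kz_det : Kz.det = 1441451531520 := by
  rw [Matrix.det_of_lowerTriangular Kz Kz_lower]
  norm_num [Kz, Fin.prod_univ_succ, Matrix.cons_val_succ]

set_option maxRecDepth 4000 in
lemma Uz_det : Uz.det = 4429984162789785600000000000 := by
  rw [Matrix.det_of_upperTriangular Uz_upper]
  norm_num [Uz, Fin.prod_univ_succ, Matrix.cons_val_succ]

lemma det_of_factor (K A U : Matrix (Fin 10) (Fin 10) ℤ) (hKU : K * A = U)
    (hK : K.det = 1441451531520) (hU : U.det = 4429984162789785600000000000) :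
    A.det = 3073280000000000 := by
  have h : K.det * A.det = U.det :=
    (Matrix.det_mul K A).symm.trans (congrArg Matrix.det hKU)
  rw [hK, hU] at h
  linarith

lemma Aexp_det : Aexp.det = 3073280000000000 :=
  det_of_factor Kz Aexp Uz KA_eq_U Kz_det Uz_det

lemma Az_det : Az.det = 3073280000000000 := by
  rw [← Matrix.det_submatrix_equiv_self (Equiv.ofBijective vH vH_bij) Az]
  have : Az.submatrix (⇑(Equiv.ofBijective vH vH_bij)) (⇑(Equiv.ofBijective vH vH_bij))
      = Az.submatrix vH vH := rfl
  rw [this, Az_submatrix, Aexp_det]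

lemma hess_eq : HessianMatrix = (2 : ℝ)⁻¹ • (Az.map (Int.cast : ℤ → ℝ)) := by
  ext s t
  simp only [HessianMatrix, Az, Matrix.smul_apply, Matrix.map_apply]
  split_ifs <;> norm_num [smul_eq_mul]

lemma map_det_cast (A : Matrix (Fin 10) (Fin 10) ℤ) :
    (A.map (Int.cast : ℤ → ℝ)).det = ((A.det : ℤ) : ℝ) := by
  rw [show A.map (Int.cast : ℤ → ℝ) = (Int.castRingHom ℝ).mapMatrix A from rfl,
    ← RingHom.map_det]
  simp

lemma det_smul_fin (M : Matrix (Fin 10) (Fin 10) ℝ) :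
    ((2 : ℝ)⁻¹ • M).det = 2⁻¹ ^ 10 * M.det := by
  have := Matrix.det_smul M ((2:ℝ)⁻¹)
  simpa using this

theorem det_hessianMatrix :
    HessianMatrix.det = 3001250000000 ∧
    HessianMatrix.det = (-10) * (-20) ^ 5 * (35/2) ^ 4 := by
  have h1 : (HessianMatrix.submatrix vH vH).det = HessianMatrix.det := by
    rw [← Matrix.det_submatrix_equiv_self (Equiv.ofBijective vH vH_bij) HessianMatrix]
    have he : HessianMatrix.submatrix (⇑(Equiv.ofBijective vH vH_bij))
        (⇑(Equiv.ofBijective vH vH_bij)) = HessianMatrix.submatrix vH vH := rfl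
    rw [he]
  have h2 : HessianMatrix.submatrix vH vH
      = (2 : ℝ)⁻¹ • ((Az.submatrix vH vH).map (Int.cast : ℤ → ℝ)) := by
    rw [hess_eq]; rfl
  have h3 : HessianMatrix.submatrix vH vH
      = (2 : ℝ)⁻¹ • (Aexp.map (Int.cast : ℤ → ℝ)) :=
    h2.trans (congrArg (fun X : Matrix (Fin 10) (Fin 10) ℤ =>
      (2 : ℝ)⁻¹ • (X.map (Int.cast : ℤ → ℝ))) Az_submatrix)
  have h4 : HessianMatrix.det = 2⁻¹ ^ 10 * ((Aexp.det : ℤ) : ℝ) :=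
    h1.symm.trans ((congrArg Matrix.det h3).trans
      ((det_smul_fin (Aexp.map (Int.cast : ℤ → ℝ))).trans
        (congrArg (fun x : ℝ => 2⁻¹ ^ 10 * x) (map_det_cast Aexp))))
  have h5 : HessianMatrix.det = 2⁻¹ ^ 10 * (((3073280000000000 : ℤ) : ℤ) : ℝ) :=
    h4.trans (congrArg (fun z : ℤ => 2⁻¹ ^ 10 * ((z : ℤ) : ℝ)) Aexp_det)
  have h : HessianMatrix.det = 3001250000000 := by
    rw [h5]; norm_num
  exact ⟨h, by rw [h]; norm_num⟩
end

section
/- Let T be the 10×10 real symmetric matrix whose rows and columns are indexed by the 2-element subsets of {1,2,3,4,5}, with entries T(s,s) = -4, T(s,t) = 7/2 if s and t share exactly one element, and T(s,t) = -9 if s and t are disjoint. Then for every complex number z, det(z·I - i·T) = (z + 10i)·(z + 20i)^5·(z - (35/2)i)^4, where I is the 10×10 identity matrix and i is the imaginary unit. -/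
namespace DetAux

abbrev S := {s : Finset (Fin 5) // s.card = 2}

/-- Integer version of twice the Hessian matrix. -/
def HZ : S → S → ℤ :=
  fun s t =>
    if (s.1 ∩ t.1).card = 2 then -8
    else if (s.1 ∩ t.1).card = 1 then 7
    else -18

def pairs : Fin 10 → Finset (Fin 5) :=
  ![{0,1},{0,2},{0,3},{0,4},{1,2},{1,3},{1,4},{2,3},{2,4},{3,4}]

lemma pairs_card : ∀ i, (pairs i).card = 2 := by decide

def f : Fin 10 → S := fun i => ⟨pairs i, pairs_card i⟩

lemma f_bij : Function.Bijective f := by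
  rw [Fintype.bijective_iff_injective_and_card]
  exact ⟨by decide, by decide⟩

noncomputable def e : Fin 10 ≃ S := Equiv.ofBijective f f_bij

def Tz : Matrix (Fin 10) (Fin 10) ℤ :=
  !![-8, 7, 7, 7, 7, 7, 7, -18, -18, -18;
     7, -8, 7, 7, 7, -18, -18, 7, 7, -18;
     7, 7, -8, 7, -18, 7, -18, 7, -18, 7;
     7, 7, 7, -8, -18, -18, 7, -18, 7, 7;
     7, 7, -18, -18, -8, 7, 7, 7, 7, -18;
     7, -18, 7, -18, 7, -8, 7, 7, -18, 7;
     7, -18, -18, 7, 7, 7, -8, -18, 7, 7;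
     -18, 7, 7, -18, 7, 7, -18, -8, 7, 7;
     -18, 7, -18, 7, 7, -18, 7, 7, -8, 7;
     -18, -18, 7, 7, -18, 7, 7, 7, 7, -8]

def Pz : Matrix (Fin 10) (Fin 10) ℤ :=
  !![1, 0, 0, 2, 2, 1, 0, -2, -4, -4;
     1, 1, 1, -1, -1, 1, -1, 1, 2, -4;
     1, -1, 1, -1, 1, -1, -1, 1, -5, 1;
     1, 0, -2, 0, -2, -1, -1, -3, 1, 1;
     1, -1, -1, -1, -1, 1, 1, 1, 2, -4;
     1, 1, -1, -1, 1, -1, 1, 1, -5, 1;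
     1, 0, 2, 0, -2, -1, 1, -3, 1, 1;
     1, 0, 0, 2, -2, -1, 0, 4, 1, 1;
     1, 0, 0, 0, 4, -1, 0, 0, 7, 1;
     1, 0, 0, 0, 0, 3, 0, 0, 0, 6]

def dv : Fin 10 → ℤ := ![-20, -40, -40, -40, -40, -40, 35, 35, 35, 35]

def gv : Fin 10 → ℤ := ![10, 4, 12, 12, 36, 18, 6, 42, 126, 90]

lemma key1 : Tz * Pz = Pz * Matrix.diagonal dv := by decide

lemma key2 : Pz.transpose * Pz = Matrix.diagonal gv := by decide

lemma hHZ : ∀ i j : Fin 10, HZ (f i) (f j) = Tz i j := by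
  letI := fun i j : Fin 10 => Int.instDecidableEq (HZ (f i) (f j)) (Tz i j)
  decide

lemma gv_prod_ne : (∏ i, gv i : ℤ) ≠ 0 := by decide

lemma hHR (s t : S) : HessianMatrix s t = ((HZ s t : ℤ) : ℝ) / 2 := by
  unfold HessianMatrix HZ
  split_ifs <;> norm_num

/- Generic determinant lemmas (stated for matrix *variables*, so that applying
them to large concrete matrices causes no heavy unification). -/

lemma gen_det_ne {n : Type*} [Fintype n] [DecidableEq n]
    (A : Matrix n n ℤ) (g : n → ℤ) (h : A.transpose * A = Matrix.diagonal g)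
    (hg : (∏ i, g i) ≠ 0) : A.det ≠ 0 := by
  intro h0
  have h2 := congrArg Matrix.det h
  rw [Matrix.det_mul, Matrix.det_transpose, h0, mul_zero, Matrix.det_diagonal] at h2
  exact hg h2.symm

lemma gen_map_ne {n : Type*} [Fintype n] [DecidableEq n]
    (A : Matrix n n ℤ) (h : A.det ≠ 0) : (A.map (fun x : ℤ => (x : ℂ))).det ≠ 0 := by
  have hPd : (A.map (fun x : ℤ => (x : ℂ))).det = ((A.det : ℤ) : ℂ) :=
    (RingHom.map_det (Int.castRingHom ℂ) A).symm
  rw [hPd]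
  exact_mod_cast h

lemma gen_map_rel {n : Type*} [Fintype n] [DecidableEq n]
    (A B : Matrix n n ℤ) (d : n → ℤ) (h : A * B = B * Matrix.diagonal d) :
    (A.map (fun x : ℤ => (x : ℂ))) * (B.map (fun x : ℤ => (x : ℂ)))
      = (B.map (fun x : ℤ => (x : ℂ))) * Matrix.diagonal (fun i => ((d i : ℤ) : ℂ)) := by
  have h2 := congrArg (Matrix.map · (Int.castRingHom ℂ)) h
  simp only [Matrix.map_mul] at h2
  rw [Matrix.diagonal_map (by simp)] at h2
  exact h2

lemma gen_det_eq {n : Type*} [Fintype n] [DecidableEq n]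
    (A P : Matrix n n ℂ) (d : n → ℂ) (hAP : A * P = P * Matrix.diagonal d)
    (hP : P.det ≠ 0) : A.det = ∏ i, d i := by
  have h := congrArg Matrix.det hAP
  rw [Matrix.det_mul, Matrix.det_mul, Matrix.det_diagonal] at h
  rw [mul_comm] at h
  exact mul_left_cancel₀ hP h

lemma gen_shift {n : Type*} [Fintype n] [DecidableEq n]
    (z w : ℂ) (A P : Matrix n n ℂ) (d : n → ℂ)
    (hAP : A * P = P * Matrix.diagonal d) (hP : P.det ≠ 0) :
    (z • (1 : Matrix n n ℂ) - w • A).det = ∏ i, (z - w * d i) := by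
  refine gen_det_eq _ P _ ?_ hP
  have hd : Matrix.diagonal (fun i => z - w * d i)
      = z • (1 : Matrix n n ℂ) - w • Matrix.diagonal d := by
    ext i j
    by_cases h : i = j <;> simp [Matrix.diagonal, Matrix.one_apply, h]
  rw [Matrix.sub_mul, Matrix.smul_mul, Matrix.smul_mul, Matrix.one_mul, hAP, hd,
    Matrix.mul_sub, Matrix.mul_smul, Matrix.mul_smul, Matrix.mul_one]

lemma hTP : (Tz.map (fun x : ℤ => (x : ℂ))) * (Pz.map (fun x : ℤ => (x : ℂ)))
    = (Pz.map (fun x : ℤ => (x : ℂ))) * Matrix.diagonal (fun i => ((dv i : ℤ) : ℂ)) :=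
  gen_map_rel Tz Pz dv key1

lemma detPc_ne : (Pz.map (fun x : ℤ => (x : ℂ))).det ≠ 0 :=
  gen_map_ne Pz (gen_det_ne Pz gv key2 gv_prod_ne)

end DetAux

open DetAux in
theorem det_complex_shift_hessianMatrix (z : ℂ) :
    ((z • (1 : Matrix {s : Finset (Fin 5) // s.card = 2}
          {s : Finset (Fin 5) // s.card = 2} ℂ))
        - Complex.I • HessianMatrix.map (Complex.ofReal)).det =
      (z + 10 * Complex.I) * (z + 20 * Complex.I) ^ 5 *
        (z - (35/2) * Complex.I) ^ 4 := by
  classical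
  rw [← Matrix.det_submatrix_equiv_self e]
  have hsub : ((z • (1 : Matrix S S ℂ))
      - Complex.I • HessianMatrix.map (Complex.ofReal)).submatrix e e
      = z • (1 : Matrix (Fin 10) (Fin 10) ℂ)
        - (Complex.I / 2) • Tz.map (fun x : ℤ => (x : ℂ)) := by
    ext i j
    have hei : e i = f i := rfl
    have hej : e j = f j := rfl
    simp only [Matrix.submatrix_apply, Matrix.sub_apply, Matrix.smul_apply,
      Matrix.one_apply, Matrix.map_apply, hei, hej]
    have h1 : HessianMatrix (f i) (f j) = ((HZ (f i) (f j) : ℤ) : ℝ) / 2 := hHR _ _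
    have h2 : HZ (f i) (f j) = Tz i j := hHZ i j
    have h3 : (if f i = f j then (1:ℂ) else 0) = (if i = j then (1:ℂ) else 0) := by
      congr 1
      simp only [eq_iff_iff]
      exact ⟨fun h => f_bij.1 h, fun h => h ▸ rfl⟩
    rw [h1, h2, h3]
    simp only [smul_eq_mul]
    push_cast
    ring
  rw [hsub]
  rw [gen_shift z (Complex.I / 2) (Tz.map (fun x : ℤ => (x : ℂ)))
    (Pz.map (fun x : ℤ => (x : ℂ))) (fun i => ((dv i : ℤ) : ℂ)) hTP detPc_ne]
  simp only [Fin.prod_univ_succ, Fin.prod_univ_zero, dv, Matrix.cons_val_succ, Matrix.cons_val_zero]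
  norm_num [Matrix.cons_val_zero, Matrix.cons_val_one, Matrix.head_cons]
  ring
end

section
/- Let m be a positive integer and let M be an m×m complex symmetric matrix (Mᵀ = M) such that the real m×m matrix of real parts (Re M(i,j)) is positive definite. Then the Gaussian integral I = ∫_{ℝ^m} exp(-∑_{i,j} M(i,j) x_i x_j) dx converges and satisfies I² = π^m / det M; in particular det M ≠ 0. -/
open MeasureTheory Matrix

lemma cgi_exists_congruence (m : ℕ) (M : Matrix (Fin m) (Fin m) ℂ) (hsym : Mᵀ = M)
    (hpos : (M.map Complex.re).PosDef) :
    ∃ (T : Matrix (Fin m) (Fin m) ℝ) (d : Fin m → ℝ), T.det ≠ 0 ∧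
      (T.map Complex.ofReal)ᵀ * M * (T.map Complex.ofReal)
        = diagonal (fun j => 1 + d j * Complex.I) := by
  set A : Matrix (Fin m) (Fin m) ℝ := M.map Complex.re with hAdef
  set Bi : Matrix (Fin m) (Fin m) ℝ := M.map Complex.im with hBidef
  obtain ⟨B, hB⟩ : ∃ B : Matrix (Fin m) (Fin m) ℝ, A = Bᴴ * B := by
    open scoped MatrixOrder in
    exact ⟨CFC.sqrt A, by
      rw [← star_eq_conjTranspose, (CFC.sqrt_nonneg A).isSelfAdjoint.star_eq,
        CFC.sqrt_mul_sqrt_self A hpos.posSemidef.nonneg]⟩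
  rw [conjTranspose_eq_transpose_of_trivial] at hB
  have hdetB : B.det ≠ 0 := by
    intro h
    have := hpos.det_pos
    rw [hB, det_mul, det_transpose, h] at this
    simp at this
  have hBB : B * B⁻¹ = 1 := mul_nonsing_inv B (isUnit_iff_ne_zero.mpr hdetB)
  have hBB' : B⁻¹ * B = 1 := nonsing_inv_mul B (isUnit_iff_ne_zero.mpr hdetB)
  have hBisym : Biᵀ = Bi := by
    ext i j
    simp only [transpose_apply, hBidef, map_apply]
    have := congrFun (congrFun hsym i) j
    simp only [transpose_apply] at this
    rw [this]
  set C : Matrix (Fin m) (Fin m) ℝ := (B⁻¹)ᵀ * Bi * B⁻¹ with hCdef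
  have hC : C.IsHermitian := by
    have : Cᵀ = C := by
      rw [hCdef, transpose_mul, transpose_mul, hBisym, transpose_transpose, Matrix.mul_assoc]
    rwa [IsHermitian, conjTranspose_eq_transpose_of_trivial]
  set Q : Matrix (Fin m) (Fin m) ℝ := (hC.eigenvectorUnitary : Matrix (Fin m) (Fin m) ℝ) with hQdef
  set d : Fin m → ℝ := hC.eigenvalues with hddef
  have hQunit : Qᵀ * Q = 1 := by
    have := (Matrix.mem_unitaryGroup_iff').mp hC.eigenvectorUnitary.2
    rwa [star_eq_conjTranspose, conjTranspose_eq_transpose_of_trivial] at this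
  have hQdiag : Qᵀ * C * Q = diagonal d := by
    have := hC.conjStarAlgAut_star_eigenvectorUnitary
    simp only [Unitary.conjStarAlgAut_star_apply, Unitary.coe_star, RCLike.ofReal_real_eq_id,
      Function.id_comp] at this
    rw [star_eq_conjTranspose, conjTranspose_eq_transpose_of_trivial] at this
    convert this using 2
  have hdetQ : Q.det ≠ 0 := by
    intro h
    have := congrArg Matrix.det hQunit
    rw [det_mul, det_transpose, h] at this
    simp at this
  refine ⟨B⁻¹ * Q, d, ?_, ?_⟩
  · rw [det_mul]
    exact mul_ne_zero (by rw [Matrix.det_nonsing_inv]; simp [Ring.inverse_eq_inv']; exact hdetB) hdetQ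
  · -- real identities
    have hTA : (B⁻¹ * Q)ᵀ * A * (B⁻¹ * Q) = 1 := by
      rw [hB, transpose_mul]
      calc Qᵀ * (B⁻¹)ᵀ * (Bᵀ * B) * (B⁻¹ * Q)
          = Qᵀ * ((B * B⁻¹)ᵀ * (B * B⁻¹)) * Q := by
            rw [transpose_mul]
            noncomm_ring
        _ = 1 := by rw [hBB]; simp [hQunit]
    have hTB : (B⁻¹ * Q)ᵀ * Bi * (B⁻¹ * Q) = diagonal d := by
      rw [transpose_mul]
      calc Qᵀ * (B⁻¹)ᵀ * Bi * (B⁻¹ * Q)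
          = Qᵀ * ((B⁻¹)ᵀ * Bi * B⁻¹) * Q := by noncomm_ring
        _ = diagonal d := by rw [← hCdef, hQdiag]
    -- complexify
    have hM : M = A.map Complex.ofReal + Complex.I • (Bi.map Complex.ofReal) := by
      ext i j
      simp only [Matrix.add_apply, Matrix.smul_apply, map_apply, hAdef, hBidef, smul_eq_mul]
      rw [mul_comm, Complex.re_add_im]
    set f : ℝ →+* ℂ := Complex.ofRealHom with hfdef
    have hmapmul : ∀ (X Y : Matrix (Fin m) (Fin m) ℝ),
        (X * Y).map Complex.ofReal = X.map Complex.ofReal * Y.map Complex.ofReal := by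
      intro X Y
      exact Matrix.map_mul (f := f)
    have htr : ∀ X : Matrix (Fin m) (Fin m) ℝ,
        (Xᵀ).map Complex.ofReal = (X.map Complex.ofReal)ᵀ := fun X => rfl
    have hconj : ∀ X : Matrix (Fin m) (Fin m) ℝ,
        ((B⁻¹ * Q).map Complex.ofReal)ᵀ * X.map Complex.ofReal * ((B⁻¹ * Q).map Complex.ofReal)
          = ((B⁻¹ * Q)ᵀ * X * (B⁻¹ * Q)).map Complex.ofReal := by
      intro X
      rw [← htr, ← hmapmul, ← hmapmul]
    rw [hM, Matrix.mul_add, Matrix.add_mul, Matrix.mul_smul, Matrix.smul_mul, hconj, hconj,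
      hTA, hTB]
    ext i j
    by_cases h : i = j
    · subst h
      simp [Matrix.map_one, diagonal_apply_eq, mul_comm]
    · simp [diagonal_apply_ne _ h, Matrix.one_apply_ne h, Matrix.map_apply]

/-- The complex Gaussian integral over ℝ^m: if `M` is a complex symmetric `m × m` matrix
whose matrix of real parts is positive definite, then `∫ exp(-xᵀMx) dx` converges and its
square equals `π^m / det M`; in particular `det M ≠ 0`. -/
theorem complex_gaussian_integral (m : ℕ) (hm : 0 < m)
    (M : Matrix (Fin m) (Fin m) ℂ) (hsym : Mᵀ = M)
    (hpos : (M.map Complex.re).PosDef) :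
    Integrable
        (fun x : Fin m → ℝ =>
          Complex.exp (-∑ i, ∑ j, M i j * (x i : ℂ) * (x j : ℂ))) ∧
      (∫ x : Fin m → ℝ,
          Complex.exp (-∑ i, ∑ j, M i j * (x i : ℂ) * (x j : ℂ))) ^ 2 =
        (Real.pi : ℂ) ^ m / M.det ∧
      M.det ≠ 0 := by
  obtain ⟨T, d, hdT, hcongr⟩ := cgi_exists_congruence m M hsym hpos
  set b : Fin m → ℂ := fun j => 1 + d j * Complex.I with hbdef
  have hbre : ∀ j, 0 < (b j).re := by intro j; simp [hbdef]
  have hbne : ∀ j, b j ≠ 0 := by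
    intro j h
    have := hbre j
    rw [h] at this
    simp at this
  set Tc : Matrix (Fin m) (Fin m) ℂ := T.map Complex.ofReal with hTcdef
  set f : (Fin m → ℝ) → ℂ :=
    fun x => Complex.exp (-∑ i, ∑ j, M i j * (x i : ℂ) * (x j : ℂ)) with hfdef
  -- quadratic form as dot product
  have quad : ∀ z : Fin m → ℂ, z ⬝ᵥ M *ᵥ z = ∑ i, ∑ j, M i j * z i * z j := by
    intro z
    simp only [dotProduct, mulVec, Finset.mul_sum]
    exact Finset.sum_congr rfl fun i _ => Finset.sum_congr rfl fun j _ => by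
      ring
  -- composition with T
  have hcomp : ∀ y : Fin m → ℝ,
      (∑ i, ∑ j, M i j * (((T *ᵥ y) i : ℝ) : ℂ) * (((T *ᵥ y) j : ℝ) : ℂ))
        = ∑ j, b j * (y j : ℂ) ^ 2 := by
    intro y
    set yc : Fin m → ℂ := fun i => (y i : ℂ) with hycdef
    have hTy : (fun i => (((T *ᵥ y) i : ℝ) : ℂ)) = Tc *ᵥ yc := by
      funext i
      simp [Matrix.mulVec, dotProduct, hTcdef, hycdef]
    rw [← quad]
    show (fun i => (((T *ᵥ y) i : ℝ) : ℂ)) ⬝ᵥ M *ᵥ (fun i => (((T *ᵥ y) i : ℝ) : ℂ))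
        = ∑ j, b j * yc j ^ 2
    rw [hTy, mulVec_mulVec, Matrix.dotProduct_mulVec, ← vecMul_transpose,
      Matrix.vecMul_vecMul, ← Matrix.mul_assoc, hcongr]
    simp only [Matrix.vecMul_diagonal, dotProduct]
    exact Finset.sum_congr rfl fun j _ => by ring
  set g : Fin m → ℝ → ℂ := fun j t => Complex.exp (-(b j) * (t : ℂ) ^ 2) with hgdef
  have hgint : ∀ j, Integrable (g j) := fun j => integrable_cexp_neg_mul_sq (hbre j)
  have hfT : ∀ y : Fin m → ℝ, f (T *ᵥ y) = ∏ j, g j (y j) := by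
    intro y
    rw [hfdef]
    simp only [hcomp y]
    rw [← Complex.exp_sum]
    congr 1
    rw [← Finset.sum_neg_distrib]
    exact Finset.sum_congr rfl fun j _ => by ring
  have hintcomp : Integrable (fun y : Fin m → ℝ => f (T *ᵥ y)) := by
    simp only [hfT]
    exact Integrable.fintype_prod hgint
  -- continuity of f
  have hfc : Continuous f := by
    apply Complex.continuous_exp.comp
    apply Continuous.neg
    apply continuous_finset_sum
    intro i _
    apply continuous_finset_sum
    intro j _
    exact (continuous_const.mul (Complex.continuous_ofReal.comp (continuous_apply i))).mul
      (Complex.continuous_ofReal.comp (continuous_apply j))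
  -- measure map
  set c : ENNReal := ENNReal.ofReal |T.det|⁻¹ with hcdef
  have hmapvol : Measure.map (Matrix.toLin' T) volume = c • volume := by
    rw [Real.map_matrix_volume_pi_eq_smul_volume_pi hdT, hcdef, abs_inv]
  have hc0 : c ≠ 0 := by
    have h : (0:ℝ) < |T.det|⁻¹ := by positivity
    simp only [hcdef, ne_eq, ENNReal.ofReal_eq_zero, not_le]
    exact h
  have hctop : c ≠ ⊤ := ENNReal.ofReal_ne_top
  have hLmeas : Measurable (Matrix.toLin' T) :=
    (Matrix.toLin' T).continuous_of_finiteDimensional.measurable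
  have hTapp : ∀ y, (Matrix.toLin' T) y = T *ᵥ y := fun y => Matrix.toLin'_apply T y
  have hintmap : Integrable f (Measure.map (Matrix.toLin' T) volume) := by
    rw [integrable_map_measure hfc.aestronglyMeasurable hLmeas.aemeasurable]
    have : f ∘ (Matrix.toLin' T) = fun y => f (T *ᵥ y) := by
      funext y; simp [Function.comp, hTapp]
    rwa [this]
  have hint : Integrable f volume := by
    rw [hmapvol] at hintmap
    have h2 := hintmap.smul_measure (c := c⁻¹) (ENNReal.inv_ne_top.mpr hc0)
    rwa [smul_smul, ENNReal.inv_mul_cancel hc0 hctop, one_smul] at h2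
  -- integral computation
  have hIcomp : ∫ y : Fin m → ℝ, f (T *ᵥ y) = ∏ j, ∫ t : ℝ, g j t := by
    calc ∫ y : Fin m → ℝ, f (T *ᵥ y) = ∫ y : Fin m → ℝ, ∏ j, g j (y j) := by
          simp only [hfT]
      _ = ∏ j, ∫ t : ℝ, g j t := integral_fintype_prod_eq_prod g
  have hImap : ∫ y : Fin m → ℝ, f (T *ᵥ y) = |T.det|⁻¹ • ∫ x : Fin m → ℝ, f x := by
    have h1 : ∫ y : Fin m → ℝ, f (T *ᵥ y) = ∫ x, f x ∂(Measure.map (Matrix.toLin' T) volume) := by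
      rw [integral_map hLmeas.aemeasurable hfc.aestronglyMeasurable]
      simp only [hTapp]
    rw [h1, hmapvol, integral_smul_measure, hcdef,
      ENNReal.toReal_ofReal (by positivity)]
  have honed : ∀ j, ∫ t : ℝ, g j t = ((Real.pi : ℂ) / b j) ^ (1 / 2 : ℂ) := fun j =>
    integral_gaussian_complex (hbre j)
  have hIval : ∫ x : Fin m → ℝ, f x
      = ((|T.det| : ℝ) : ℂ) * ∏ j, ((Real.pi : ℂ) / b j) ^ (1 / 2 : ℂ) := by
    have h3 : |T.det|⁻¹ • ∫ x : Fin m → ℝ, f x = ∏ j, ((Real.pi : ℂ) / b j) ^ (1 / 2 : ℂ) := by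
      rw [← hImap, hIcomp]
      exact Finset.prod_congr rfl fun j _ => honed j
    have habs : |T.det| ≠ 0 := abs_ne_zero.mpr hdT
    calc ∫ x : Fin m → ℝ, f x
          = ((|T.det| : ℝ) : ℂ) * (|T.det|⁻¹ • ∫ x : Fin m → ℝ, f x) := by
          rw [← Complex.real_smul, smul_smul, mul_inv_cancel₀ habs, one_smul]
      _ = ((|T.det| : ℝ) : ℂ) * ∏ j, ((Real.pi : ℂ) / b j) ^ (1 / 2 : ℂ) := by
          rw [h3]
  -- determinant identity
  have hdetTc : Tc.det = (T.det : ℂ) := (Complex.ofRealHom.map_det T).symm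
  have hdetid : (T.det : ℂ) ^ 2 * M.det = ∏ j, b j := by
    have := congrArg Matrix.det hcongr
    rw [det_mul, det_mul, det_transpose, det_diagonal, hdetTc] at this
    rw [← this]; ring
  have hprodne : (∏ j, b j) ≠ 0 := Finset.prod_ne_zero_iff.mpr fun j _ => hbne j
  have hdetM : M.det ≠ 0 := by
    intro h
    rw [h, mul_zero] at hdetid
    exact hprodne hdetid.symm
  refine ⟨hint, ?_, hdetM⟩
  rw [hIval, mul_pow, ← Finset.prod_pow]
  have hsq : ∀ j, (((Real.pi : ℂ) / b j) ^ (1 / 2 : ℂ)) ^ 2 = (Real.pi : ℂ) / b j := by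
    intro j
    have : (1 / 2 : ℂ) = ((2 : ℕ) : ℂ)⁻¹ := by norm_num
    rw [this]
    exact Complex.cpow_nat_inv_pow _ two_ne_zero
  rw [Finset.prod_congr rfl fun j _ => hsq j, Finset.prod_div_distrib, Finset.prod_const,
    Finset.card_univ, Fintype.card_fin]
  have habs2 : ((|T.det| : ℝ) : ℂ) ^ 2 = (T.det : ℂ) ^ 2 := by
    rw [← Complex.ofReal_pow, ← Complex.ofReal_pow, sq_abs]
  rw [habs2]
  field_simp [hprodne, hdetM]
  linear_combination hdetid
end

section
/- Let T be the 10×10 real symmetric matrix whose rows and columns are indexed by the 2-element subsets of {1,2,3,4,5}, with entries T(s,s) = -4, T(s,t) = 7/2 if s and t share exactly one element, and T(s,t) = -9 if s and t are disjoint. Then, as ε → 0⁺, the regularized integral ∫_{ℝ^10} exp(-ε‖x‖²)·cos(xᵀTx) dx converges to 0. -/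
open MeasureTheory Filter

namespace FresnelAux

open Complex

abbrev Idx := {s : Finset (Fin 5) // s.card = 2}

/-! ### Basic complex square root computations -/

lemma sqrt_exp_log {t : ℝ} (ht : 0 < t) : Real.exp (Real.log t * (1/2)) = Real.sqrt t := by
  rw [Real.sqrt_eq_rpow, Real.rpow_def_of_pos ht]

lemma sqrt_two_cpx : (Real.sqrt 2 : ℂ) * (Real.sqrt 2 : ℂ) = 2 := by
  norm_cast
  exact Real.mul_self_sqrt (by norm_num)

lemma sqrt_half_mul {t : ℝ} (ht : 0 < t) :
    Real.sqrt (t/2) * Real.sqrt 2 = Real.sqrt t := by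
  rw [← Real.sqrt_mul (by positivity)]
  norm_num

lemma cpow_mul_I_half {t : ℝ} (ht : 0 < t) :
    ((t : ℂ) * I) ^ (1/2 : ℂ) = (Real.sqrt (t/2) : ℂ) * (1 + I) := by
  have hz : (t:ℂ) * I ≠ 0 := by simp [Complex.ext_iff, ht.ne']
  rw [Complex.cpow_def_of_ne_zero hz]
  have habs : ‖(t:ℂ) * I‖ = t := by simp [abs_of_pos ht]
  have harg : Complex.arg ((t:ℂ) * I) = Real.pi / 2 := by
    rw [Complex.arg_real_mul _ ht, Complex.arg_I]
  rw [Complex.log, habs, harg, add_mul, Complex.exp_add]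
  have h1 : (↑(Real.log t) * (1/2) : ℂ) = ((Real.log t * (1/2) : ℝ) : ℂ) := by push_cast; ring
  have h2 : ((↑(Real.pi/2) * I) * (1/2 : ℂ)) = ((Real.pi/4 : ℝ) : ℂ) * I := by push_cast; ring
  rw [h1, h2, ← Complex.ofReal_exp, sqrt_exp_log ht, Complex.exp_mul_I,
    ← Complex.ofReal_cos, ← Complex.ofReal_sin, Real.cos_pi_div_four, Real.sin_pi_div_four,
    ← sqrt_half_mul ht]
  push_cast
  linear_combination ((Real.sqrt (t/2) : ℂ) * (1 + I) / 2) * sqrt_two_cpx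

lemma cpow_mul_neg_I_half {t : ℝ} (ht : 0 < t) :
    ((t : ℂ) * -I) ^ (1/2 : ℂ) = (Real.sqrt (t/2) : ℂ) * (1 - I) := by
  have hz : (t:ℂ) * -I ≠ 0 := by simp [Complex.ext_iff, ht.ne']
  rw [Complex.cpow_def_of_ne_zero hz]
  have habs : ‖(t:ℂ) * -I‖ = t := by simp [abs_of_pos ht]
  have harg : Complex.arg ((t:ℂ) * -I) = -(Real.pi / 2) := by
    rw [Complex.arg_real_mul _ ht, Complex.arg_neg_I]
  rw [Complex.log, habs, harg, add_mul, Complex.exp_add]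
  have h1 : (↑(Real.log t) * (1/2) : ℂ) = ((Real.log t * (1/2) : ℝ) : ℂ) := by push_cast; ring
  have h2 : ((↑(-(Real.pi/2)) * I) * (1/2 : ℂ)) = ((-(Real.pi/4) : ℝ) : ℂ) * I := by push_cast; ring
  rw [h1, h2, ← Complex.ofReal_exp, sqrt_exp_log ht, Complex.exp_mul_I,
    ← Complex.ofReal_cos, ← Complex.ofReal_sin, Real.cos_neg, Real.sin_neg,
    Real.cos_pi_div_four, Real.sin_pi_div_four, ← sqrt_half_mul ht]
  push_cast
  linear_combination ((Real.sqrt (t/2) : ℂ) * (1 - I) / 2) * sqrt_two_cpx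

lemma div_negI {a : ℝ} (ha : a ≠ 0) :
    (Real.pi : ℂ) / (-(a:ℂ) * I) = ((Real.pi / a : ℝ) : ℂ) * I := by
  have hI : (-(a:ℂ) * I) ≠ 0 := by
    simp [Complex.I_ne_zero, Complex.ofReal_ne_zero.mpr ha]
  have ha' : (a:ℂ) ≠ 0 := Complex.ofReal_ne_zero.mpr ha
  rw [div_eq_iff hI]
  push_cast
  field_simp
  linear_combination Complex.I_sq

lemma factor_pos {d : ℝ} (hd : 0 < d) :
    ((Real.pi : ℂ) / (-(d:ℂ) * I)) ^ (1/2 : ℂ)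
      = (Real.sqrt (Real.pi / d / 2) : ℂ) * (1 + I) := by
  rw [div_negI hd.ne', cpow_mul_I_half (div_pos Real.pi_pos hd)]

lemma factor_neg {d : ℝ} (hd : d < 0) :
    ((Real.pi : ℂ) / (-(d:ℂ) * I)) ^ (1/2 : ℂ)
      = (Real.sqrt (Real.pi / (-d) / 2) : ℂ) * (1 - I) := by
  have h1 : (Real.pi : ℂ) / (-(d:ℂ) * I) = ((Real.pi / (-d) : ℝ) : ℂ) * -I := by
    rw [div_negI hd.ne]
    push_cast
    ring
  rw [h1, cpow_mul_neg_I_half (div_pos Real.pi_pos (neg_pos.mpr hd))]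

set_option maxHeartbeats 1000000 in
lemma genprod (a₀ a₁ a₂ a₃ a₄ a₅ a₆ a₇ a₈ a₉ : ℝ) :
    ((a₀:ℂ)*(1-I) * ((a₁:ℂ)*(1+I) * ((a₂:ℂ)*(1+I) * ((a₃:ℂ)*(1+I) * ((a₄:ℂ)*(1+I) *
      ((a₅:ℂ)*(1-I) * ((a₆:ℂ)*(1-I) * ((a₇:ℂ)*(1-I) * ((a₈:ℂ)*(1-I) * ((a₉:ℂ)*(1-I))))))))))).re
      = 0 := by
  simp only [Complex.mul_re, Complex.mul_im, Complex.ofReal_re, Complex.ofReal_im,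
    Complex.add_re, Complex.add_im, Complex.sub_re, Complex.sub_im, Complex.one_re,
    Complex.one_im, Complex.I_re, Complex.I_im]
  ring

/-! ### The explicit diagonalization data -/

def pairList : Fin 10 → Finset (Fin 5) :=
  ![{0,1},{0,2},{0,3},{0,4},{1,2},{1,3},{1,4},{2,3},{2,4},{3,4}]

def pairFun (i : Fin 10) : Idx := ⟨pairList i, by fin_cases i <;> decide⟩

noncomputable def eP : Fin 10 ≃ Idx :=
  Equiv.ofBijective pairFun (by decide)

def Tq : Matrix (Fin 10) (Fin 10) ℚ :=
  fun i k =>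
    if (pairList i ∩ pairList k).card = 2 then -4
    else if (pairList i ∩ pairList k).card = 1 then 7/2
    else -9

def Pm : Matrix (Fin 10) (Fin 10) ℝ :=
  !![1, 0, 2, 2, 2, 3, 0, 0, 0, 0;
     1, 1, -1, 2, 2, -1, 4, 0, 0, 0;
     1, 1, 1, -2, 2, -1, -2, 2, 0, 0;
     1, 1, 1, 1, -3, -1, -2, -2, 0, 0;
     1, -1, -1, 2, 2, -1, -2, 0, 2, 0;
     1, -1, 1, -2, 2, -1, 1, -1, -1, 1;
     1, -1, 1, 1, -3, -1, 1, 1, -1, -1;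
     1, 0, -2, -2, 2, 1, -1, -1, -1, -1;
     1, 0, -2, 1, -3, 1, -1, 1, -1, 1;
     1, 0, 0, -3, -3, 1, 2, 0, 2, 0]

def cvec : Fin 10 → ℝ := ![10, 6, 18, 36, 60, 18, 36, 12, 12, 4]
def dvec : Fin 10 → ℝ := ![-100, 105, 315, 630, 1050, -360, -720, -240, -240, -80]

lemma cvec_pos : ∀ j, 0 < cvec j := by
  intro j; fin_cases j <;> norm_num [cvec]

lemma dvec_ne : ∀ j, dvec j ≠ 0 := by
  intro j; fin_cases j <;> norm_num [dvec]

lemma Hlem (i k : Fin 10) : HessianMatrix (eP i) (eP k) = ((Tq i k : ℚ) : ℝ) := by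
  show (if (pairList i ∩ pairList k).card = 2 then (-4:ℝ)
    else if (pairList i ∩ pairList k).card = 1 then 7/2 else -9) = _
  rw [Tq]
  split_ifs <;> norm_num

set_option maxHeartbeats 2000000 in
lemma core1 (z : Fin 10 → ℝ) :
    ∑ i : Fin 10, (∑ j : Fin 10, Pm i j * z j)^2 = ∑ j : Fin 10, cvec j * z j ^ 2 := by
  simp [Fin.sum_univ_succ, Pm, cvec]
  ring

set_option maxHeartbeats 4000000 in
lemma core2 (z : Fin 10 → ℝ) :
    ∑ i : Fin 10, ∑ k : Fin 10, ((Tq i k : ℚ) : ℝ) * (∑ j : Fin 10, Pm i j * z j)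
        * (∑ j : Fin 10, Pm k j * z j)
      = ∑ j : Fin 10, dvec j * z j ^ 2 := by
  simp [Fin.sum_univ_succ, Pm, dvec, Tq, pairList]
  ring

/-! ### The change of variables matrix -/

noncomputable def M : Matrix Idx Idx ℝ := fun s t => Pm (eP.symm s) (eP.symm t)

noncomputable def cc (s : Idx) : ℝ := cvec (eP.symm s)
noncomputable def dd (s : Idx) : ℝ := dvec (eP.symm s)

lemma cc_pos (s : Idx) : 0 < cc s := cvec_pos _
lemma dd_ne (s : Idx) : dd s ≠ 0 := dvec_ne _

lemma mulVec_apply (y : Idx → ℝ) (i : Fin 10) :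
    M.mulVec y (eP i) = ∑ j : Fin 10, Pm i j * y (eP j) := by
  rw [Matrix.mulVec, dotProduct]
  rw [← Equiv.sum_comp eP (fun t => M (eP i) t * y t)]
  simp [M]

lemma sumA (y : Idx → ℝ) :
    ∑ s : Idx, (M.mulVec y s)^2 = ∑ s : Idx, cc s * (y s)^2 := by
  rw [← Equiv.sum_comp eP (fun s => (M.mulVec y s)^2),
    ← Equiv.sum_comp eP (fun s => cc s * (y s)^2)]
  simp only [mulVec_apply]
  simpa [cc] using core1 (fun j => y (eP j))

lemma sumB (y : Idx → ℝ) :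
    ∑ s : Idx, ∑ t : Idx, HessianMatrix s t * (M.mulVec y s) * (M.mulVec y t)
      = ∑ s : Idx, dd s * (y s)^2 := by
  rw [← Equiv.sum_comp eP
    (fun s => ∑ t : Idx, HessianMatrix s t * (M.mulVec y s) * (M.mulVec y t)),
    ← Equiv.sum_comp eP (fun s => dd s * (y s)^2)]
  have h1 : ∀ i : Fin 10,
      ∑ t : Idx, HessianMatrix (eP i) t * (M.mulVec y (eP i)) * (M.mulVec y t)
        = ∑ k : Fin 10, ((Tq i k : ℚ) : ℝ) * (M.mulVec y (eP i)) * (M.mulVec y (eP k)) := by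
    intro i
    rw [← Equiv.sum_comp eP
      (fun t => HessianMatrix (eP i) t * (M.mulVec y (eP i)) * (M.mulVec y t))]
    exact Finset.sum_congr rfl fun k _ => by rw [Hlem]
  rw [Finset.sum_congr rfl fun i _ => h1 i]
  simp only [mulVec_apply]
  simpa [dd] using core2 (fun j => y (eP j))

lemma M_det_ne : M.det ≠ 0 := by
  have hinj : Function.Injective M.mulVec := by
    intro a b hab
    have h0 : M.mulVec (a - b) = 0 := by
      rw [Matrix.mulVec_sub, hab, sub_self]
    have h1 := sumA (a - b)
    rw [h0] at h1
    simp only [Pi.zero_apply, ne_eq, OfNat.ofNat_ne_zero, not_false_eq_true, zero_pow,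
      Finset.sum_const_zero] at h1
    have h2 : ∀ s ∈ Finset.univ, (0:ℝ) ≤ cc s * ((a - b) s)^2 :=
      fun s _ => mul_nonneg (cc_pos s).le (sq_nonneg _)
    have h3 := (Finset.sum_eq_zero_iff_of_nonneg h2).mp h1.symm
    funext s
    have h4 := h3 s (Finset.mem_univ s)
    have h5 : ((a - b) s)^2 = 0 := by
      rcases mul_eq_zero.mp h4 with h | h
      · exact absurd h (cc_pos s).ne'
      · exact h
    have := pow_eq_zero_iff (n := 2) (by norm_num) |>.mp h5
    have : a s - b s = 0 := this
    linarith
  have : IsUnit M := Matrix.mulVec_injective_iff_isUnit.mp hinj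
  exact ((Matrix.isUnit_iff_isUnit_det M).mp this).ne_zero

/-! ### Change of variables in the integral -/

lemma integral_change (f : (Idx → ℝ) → ℝ) (hf : Continuous f) :
    ∫ x : Idx → ℝ, f x = |M.det| * ∫ y : Idx → ℝ, f (M.mulVec y) := by
  have h1 := Real.map_matrix_volume_pi_eq_smul_volume_pi M_det_ne
  have hc : Continuous (Matrix.toLin' M) :=
    LinearMap.continuous_of_finiteDimensional (Matrix.toLin' M)
  have h2 : ∫ y : Idx → ℝ, f (M.mulVec y)
      = ∫ x, f x ∂(Measure.map (Matrix.toLin' M) volume) := by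
    rw [integral_map hc.aemeasurable hf.aestronglyMeasurable]
    simp [Matrix.toLin'_apply]
  rw [h2, h1, integral_smul_measure, ENNReal.toReal_ofReal (by positivity)]
  have habs : |M.det| ≠ 0 := abs_ne_zero.mpr M_det_ne
  rw [smul_eq_mul, abs_inv, ← mul_assoc, mul_inv_cancel₀ habs, one_mul]

/-! ### The main theorem -/

lemma integrand_continuous (ε : ℝ) :
    Continuous (fun x : Idx → ℝ =>
      Real.exp (-ε * ∑ s, (x s) ^ 2) *
        Real.cos (∑ s, ∑ t, HessianMatrix s t * x s * x t)) := by
  apply Continuous.mul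
  · exact Real.continuous_exp.comp (continuous_const.mul
      (continuous_finset_sum _ fun s _ => (continuous_apply s).pow 2))
  · exact Real.continuous_cos.comp (continuous_finset_sum _ fun s _ =>
      continuous_finset_sum _ fun t _ =>
        (continuous_const.mul (continuous_apply s)).mul (continuous_apply t))

noncomputable def bval (ε : ℝ) (s : Idx) : ℂ := (ε : ℂ) * (cc s : ℂ) - (dd s : ℂ) * I

lemma bval_re (ε : ℝ) (s : Idx) : (bval ε s).re = ε * cc s := by
  simp [bval]

lemma gauss_int {ε : ℝ} (hε : 0 < ε) (s : Idx) :
    ∫ t : ℝ, Complex.exp (-(bval ε s) * (t:ℂ)^2)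
      = ((Real.pi : ℂ) / bval ε s) ^ (1/2 : ℂ) :=
  integral_gaussian_complex (by rw [bval_re]; exact mul_pos hε (cc_pos s))

lemma gauss_integrable {ε : ℝ} (hε : 0 < ε) (s : Idx) :
    Integrable (fun t : ℝ => Complex.exp (-(bval ε s) * (t:ℂ)^2)) :=
  integrable_cexp_neg_mul_sq (by rw [bval_re]; exact mul_pos hε (cc_pos s))

lemma prod_eq (ε : ℝ) (y : Idx → ℝ) :
    Real.exp (-ε * ∑ s, (M.mulVec y s) ^ 2) *
        Real.cos (∑ s, ∑ t, HessianMatrix s t * (M.mulVec y s) * (M.mulVec y t))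
      = (∏ s : Idx, Complex.exp (-(bval ε s) * ((y s : ℝ):ℂ)^2)).re := by
  rw [← Complex.exp_sum]
  have h : ∑ s : Idx, -(bval ε s) * ((y s : ℝ):ℂ)^2
      = ((-ε * ∑ s : Idx, cc s * (y s)^2 : ℝ) : ℂ)
        + ((∑ s : Idx, dd s * (y s)^2 : ℝ) : ℂ) * I := by
    calc ∑ s : Idx, -(bval ε s) * ((y s : ℝ):ℂ)^2
        = ∑ s : Idx, ((((-ε * (cc s * (y s)^2)) : ℝ) : ℂ)
            + (((dd s * (y s)^2) : ℝ):ℂ) * I) :=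
          Finset.sum_congr rfl fun s _ => by simp only [bval]; push_cast; ring
      _ = ((∑ s : Idx, -ε * (cc s * (y s)^2) : ℝ) : ℂ)
            + ((∑ s : Idx, dd s * (y s)^2 : ℝ) : ℂ) * I := by
          rw [Finset.sum_add_distrib, Complex.ofReal_sum, Complex.ofReal_sum, Finset.sum_mul]
      _ = _ := by rw [Finset.mul_sum]
  rw [h, Complex.exp_add, ← Complex.ofReal_exp, Complex.mul_re, Complex.ofReal_re,
    Complex.ofReal_im, Complex.exp_ofReal_mul_I_re, Complex.exp_ofReal_mul_I_im]
  rw [sumA, sumB]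
  ring

lemma integral_eq {ε : ℝ} (hε : 0 < ε) :
    (∫ x : Idx → ℝ,
        Real.exp (-ε * ∑ s, (x s) ^ 2) *
          Real.cos (∑ s, ∑ t, HessianMatrix s t * x s * x t))
      = |M.det| * (∏ s : Idx, ((Real.pi : ℂ) / bval ε s) ^ (1/2 : ℂ)).re := by
  rw [integral_change _ (integrand_continuous ε)]
  congr 1
  have h1 : ∀ y : Idx → ℝ,
      Real.exp (-ε * ∑ s, (M.mulVec y s) ^ 2) *
          Real.cos (∑ s, ∑ t, HessianMatrix s t * (M.mulVec y s) * (M.mulVec y t))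
        = (∏ s : Idx, Complex.exp (-(bval ε s) * ((y s : ℝ):ℂ)^2)).re := prod_eq ε
  calc ∫ y : Idx → ℝ,
        Real.exp (-ε * ∑ s, (M.mulVec y s) ^ 2) *
          Real.cos (∑ s, ∑ t, HessianMatrix s t * (M.mulVec y s) * (M.mulVec y t))
      = ∫ y : Idx → ℝ, (∏ s : Idx, Complex.exp (-(bval ε s) * ((y s : ℝ):ℂ)^2)).re := by
        exact integral_congr_ae (Filter.Eventually.of_forall h1)
    _ = (∫ y : Idx → ℝ, ∏ s : Idx, Complex.exp (-(bval ε s) * ((y s : ℝ):ℂ)^2)).re := by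
        exact integral_re (Integrable.fintype_prod (fun s => gauss_integrable hε s))
    _ = (∏ s : Idx, ((Real.pi : ℂ) / bval ε s) ^ (1/2 : ℂ)).re := by
        rw [integral_fintype_prod_volume_eq_prod
          (f := fun (s : Idx) (t : ℝ) => Complex.exp (-(bval ε s) * (t:ℂ)^2))]
        rw [Finset.prod_congr rfl fun s _ => gauss_int hε s]

noncomputable def gsign (j : Fin 10) : ℂ := if 0 < dvec j then 1 + I else 1 - I

lemma prod_gsign : ∏ j : Fin 10, gsign j = -32 * I := by
  have h : ∀ j : Fin 10, gsign j = ![(1:ℂ) - I, 1+I, 1+I, 1+I, 1+I, 1-I, 1-I, 1-I, 1-I, 1-I] j := by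
    intro j
    fin_cases j <;> norm_num [gsign, dvec]
  rw [Finset.prod_congr rfl fun j _ => h j]
  simp only [Fin.prod_univ_succ, Fin.prod_univ_zero, mul_one,
    Matrix.cons_val_zero, Matrix.cons_val_succ]
  rw [Complex.ext_iff]
  constructor <;>
    · simp only [Complex.mul_re, Complex.mul_im, Complex.add_re, Complex.add_im,
        Complex.sub_re, Complex.sub_im, Complex.one_re, Complex.one_im, Complex.I_re,
        Complex.I_im, Complex.neg_re, Complex.neg_im, Complex.re_ofNat, Complex.im_ofNat]
      norm_num

lemma factor_eq (j : Fin 10) :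
    ((Real.pi : ℂ) / (-(dvec j : ℂ) * I)) ^ (1/2 : ℂ)
      = ((Real.sqrt (Real.pi / |dvec j| / 2) : ℝ) : ℂ) * gsign j := by
  unfold gsign
  split_ifs with h
  · rw [factor_pos h, abs_of_pos h]
  · have h' : dvec j < 0 := lt_of_le_of_ne (not_lt.mp h) (dvec_ne j)
    rw [factor_neg h', abs_of_neg h']

lemma limit_val :
    (∏ s : Idx, ((Real.pi : ℂ) / (-(dd s : ℂ) * I)) ^ (1/2 : ℂ)).re = 0 := by
  rw [← Equiv.prod_comp eP (fun s => ((Real.pi : ℂ) / (-(dd s : ℂ) * I)) ^ (1/2 : ℂ))]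
  have hdd : ∀ j : Fin 10, dd (eP j) = dvec j := by
    intro j; simp [dd]
  simp only [hdd]
  rw [Finset.prod_congr rfl fun j _ => factor_eq j, Finset.prod_mul_distrib,
    ← Complex.ofReal_prod, prod_gsign]
  set r := ∏ j : Fin 10, Real.sqrt (Real.pi / |dvec j| / 2) with hr
  have hrw : ((r:ℝ):ℂ) * (-32 * I) = ((-32 * r : ℝ) : ℂ) * I := by push_cast; ring
  rw [hrw, Complex.mul_re, Complex.ofReal_re, Complex.ofReal_im, Complex.I_re, Complex.I_im]
  ring

theorem main :
    Tendsto
      (fun ε : ℝ =>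
        ∫ x : Idx → ℝ,
          Real.exp (-ε * ∑ s, (x s) ^ 2) *
            Real.cos (∑ s, ∑ t, HessianMatrix s t * x s * x t))
      (nhdsWithin 0 (Set.Ioi 0)) (nhds 0) := by
  have heq : ∀ ε ∈ Set.Ioi (0:ℝ),
      (∫ x : Idx → ℝ,
        Real.exp (-ε * ∑ s, (x s) ^ 2) *
          Real.cos (∑ s, ∑ t, HessianMatrix s t * x s * x t))
        = |M.det| * (∏ s : Idx, ((Real.pi : ℂ) / bval ε s) ^ (1/2 : ℂ)).re :=
    fun ε hε => integral_eq hε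
  have hlim : Tendsto
      (fun ε : ℝ => |M.det| * (∏ s : Idx, ((Real.pi : ℂ) / bval ε s) ^ (1/2 : ℂ)).re)
      (nhdsWithin 0 (Set.Ioi 0)) (nhds 0) := by
    have hb0 : ∀ s : Idx, bval 0 s = -(dd s : ℂ) * I := by
      intro s; simp [bval]
    have hfac : ∀ s : Idx, Tendsto (fun ε : ℝ => ((Real.pi : ℂ) / bval ε s) ^ (1/2 : ℂ))
        (nhds 0) (nhds (((Real.pi : ℂ) / (-(dd s : ℂ) * I)) ^ (1/2 : ℂ))) := by
      intro s
      have hden0 : bval 0 s ≠ 0 := by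
        rw [hb0]
        simp [Complex.I_ne_zero, Complex.ofReal_ne_zero.mpr (dd_ne s)]
      have hdiv : ContinuousAt (fun ε : ℝ => (Real.pi : ℂ) / bval ε s) 0 := by
        apply ContinuousAt.div continuousAt_const
        · apply Continuous.continuousAt
          unfold bval
          fun_prop
        · exact hden0
      have hval : (Real.pi : ℂ) / bval 0 s = ((Real.pi / dd s : ℝ) : ℂ) * I := by
        rw [hb0, div_negI (dd_ne s)]
      have hmem : (Real.pi : ℂ) / bval 0 s ∈ Complex.slitPlane := by
        rw [hval, Complex.mem_slitPlane_iff]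
        right
        simp only [Complex.mul_im, Complex.ofReal_re, Complex.I_im, Complex.ofReal_im,
          Complex.I_re, mul_one, mul_zero, add_zero]
        exact div_ne_zero Real.pi_ne_zero (dd_ne s)
      have h2 : ContinuousAt (fun ε : ℝ => ((Real.pi : ℂ) / bval ε s) ^ (1/2 : ℂ)) 0 :=
        hdiv.cpow continuousAt_const hmem
      have h3 := h2.tendsto
      rwa [hb0] at h3
    have hprod : Tendsto (fun ε : ℝ => ∏ s : Idx, ((Real.pi : ℂ) / bval ε s) ^ (1/2 : ℂ))
        (nhds 0) (nhds (∏ s : Idx, ((Real.pi : ℂ) / (-(dd s : ℂ) * I)) ^ (1/2 : ℂ))) :=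
      tendsto_finset_prod _ fun s _ => hfac s
    have hre : Tendsto
        (fun ε : ℝ => |M.det| * (∏ s : Idx, ((Real.pi : ℂ) / bval ε s) ^ (1/2 : ℂ)).re)
        (nhds 0)
        (nhds (|M.det| * (∏ s : Idx, ((Real.pi : ℂ) / (-(dd s : ℂ) * I)) ^ (1/2 : ℂ)).re)) :=
      (Complex.continuous_re.tendsto _ |>.comp hprod).const_mul _
    rw [limit_val, mul_zero] at hre
    exact hre.mono_left nhdsWithin_le_nhds
  exact hlim.congr' (eventuallyEq_of_mem self_mem_nhdsWithin fun ε hε => (heq ε hε).symm)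

end FresnelAux

/-- As `ε → 0⁺`, the regularized integral `∫ exp(-ε‖x‖²)·cos(xᵀTx) dx` over ℝ^10
converges to `0`. -/
theorem cos_fresnel_integral_hessianMatrix :
    Tendsto
      (fun ε : ℝ =>
        ∫ x : {s : Finset (Fin 5) // s.card = 2} → ℝ,
          Real.exp (-ε * ∑ s, (x s) ^ 2) *
            Real.cos (∑ s, ∑ t, HessianMatrix s t * x s * x t))
      (nhdsWithin 0 (Set.Ioi 0)) (nhds 0) :=
  FresnelAux.main
end

section
/- Let c > 0, a > 0 and σ be real numbers, and suppose that for every real d > 0 the identity 2^{-10}·(πd/(2a))^5 = 2^{-20}·d^{20σ-9}·c²·(πd/a)^{10} holds. Then σ = 1/5 and a = (π/2)·c^{2/5}. -/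
/-- Proposition 2, case n = 1 (coupled Gaussian ansatz): if for all `d > 0`
`2⁻¹⁰·(πd/(2a))⁵ = 2⁻²⁰·d^{20σ-9}·c²·(πd/a)¹⁰`, then `σ = 1/5` and `a = (π/2)·c^{2/5}`. -/
theorem coupled_gaussian_width (c a σ : ℝ) (hc : 0 < c) (ha : 0 < a)
    (h : ∀ d : ℝ, 0 < d →
      2 ^ (-10 : ℤ) * (Real.pi * d / (2 * a)) ^ 5 =
        2 ^ (-20 : ℤ) * d ^ (20 * σ - 9) * c ^ 2 * (Real.pi * d / a) ^ 10) :
    σ = 1 / 5 ∧ a = (Real.pi / 2) * c ^ ((2 : ℝ) / 5) := by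
  have hπ := Real.pi_pos
  have h1 := h 1 one_pos
  have h2 := h 2 two_pos
  rw [Real.one_rpow] at h1
  -- base constant
  have hB : (0:ℝ) < 2 ^ (-20:ℤ) * c ^ 2 * (Real.pi / a) ^ 10 := by positivity
  -- from h1 and h2 deduce 2 ^ (20σ - 9) = 2 ^ (-5 : ℝ)
  have key : (2:ℝ) ^ (20 * σ - 9) = (2:ℝ) ^ (-5 : ℝ) := by
    have hA : Real.pi * 1 / (2 * a) = Real.pi / (2 * a) := by ring
    have hC : Real.pi * 1 / a = Real.pi / a := by ring
    rw [hA, hC] at h1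
    have hA2 : Real.pi * 2 / (2 * a) = (Real.pi / (2 * a)) * 2 := by ring
    have hC2 : Real.pi * 2 / a = (Real.pi / a) * 2 := by ring
    rw [hA2, hC2] at h2
    have h5 : (2:ℝ) ^ (-5 : ℝ) = (2:ℝ)^5 / 2^10 := by
      rw [show (-5:ℝ) = ((-5 : ℤ) : ℝ) by norm_num, Real.rpow_intCast]
      norm_num
    rw [h5]
    have hB' : (2:ℝ) ^ (-20:ℤ) * c ^ 2 * (Real.pi / a) ^ 10 ≠ 0 := ne_of_gt hB
    field_simp
    nlinarith [h1, h2, sq_nonneg ((Real.pi/a)^5), sq_nonneg c]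
  have hσ : σ = 1 / 5 := by
    have : 20 * σ - 9 = -5 := by
      by_contra hne
      rcases lt_or_gt_of_ne hne with hlt | hgt
      · exact absurd key (ne_of_lt ((Real.rpow_lt_rpow_left_iff one_lt_two).2 hlt))
      · exact absurd key (ne_of_gt ((Real.rpow_lt_rpow_left_iff one_lt_two).2 hgt))
    linarith
  refine ⟨hσ, ?_⟩
  -- now solve for a from h1
  have hA : Real.pi * 1 / (2 * a) = Real.pi / (2 * a) := by ring
  have hC : Real.pi * 1 / a = Real.pi / a := by ring
  rw [hA, hC] at h1
  have ha5 : a ^ 5 = (Real.pi / 2) ^ 5 * c ^ 2 := by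
    have ha' : a ≠ 0 := ne_of_gt ha
    field_simp at h1
    have hfac : (2 ^ 15 * Real.pi ^ 5 * a ^ 5 : ℝ) ≠ 0 := by positivity
    have hmul : (2 ^ 15 * Real.pi ^ 5 * a ^ 5 : ℝ) * (2 ^ 5 * a ^ 5) =
        (2 ^ 15 * Real.pi ^ 5 * a ^ 5) * (Real.pi ^ 5 * c ^ 2) := by
      linear_combination (2 ^ 15 * Real.pi ^ 5 * a ^ 5) * h1
    have hq := mul_left_cancel₀ hfac hmul
    linear_combination hq / 32
  have hrhs : ((Real.pi / 2) * c ^ ((2:ℝ)/5)) ^ 5 = (Real.pi / 2) ^ 5 * c ^ 2 := by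
    rw [mul_pow, ← Real.rpow_natCast (c ^ ((2:ℝ)/5)) 5, ← Real.rpow_mul hc.le]
    norm_num
  have hpos : (0:ℝ) ≤ (Real.pi / 2) * c ^ ((2:ℝ)/5) := by positivity
  exact (pow_left_inj₀ ha.le hpos (by norm_num)).1 (ha5.trans hrhs.symm)
end

section
/- Let c > 0, let n be a real number with 0 < n < 1, let σ, A, B be real numbers with A > 0, and let N : (0,∞) → (0,∞) be a function. Suppose that for every real d > 0 both of the following hold: (i) N(d)² = (1/2)·√(π d^n/(2A)), and (ii) N(d)² = (c^{1/5}/4)·d^{2σ-9/10}·π·d^n/(A + iB) as an identity of complex numbers. Then B = 0, A = (π/2)·c^{2/5}, σ = (1/4)·(9/5 - n), and σ > 1/5. -/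
/-- Proposition 1, case 0 < n < 1 (decoupled Gaussian ansatz): combining the normalization
condition (i) and the squared Wheeler-deWitt condition (ii) forces the width to be real,
`A = (π/2)·c^{2/5}`, and the vertex normalization `σ = (9/5 - n)/4 > 1/5`. -/
theorem decoupled_gaussian_width (c n σ A B : ℝ) (hc : 0 < c)
    (hn : 0 < n) (hn' : n < 1) (hA : 0 < A)
    (N : ℝ → ℝ) (hNpos : ∀ d : ℝ, 0 < d → 0 < N d)
    (hi : ∀ d : ℝ, 0 < d →
      (N d) ^ 2 = (1 / 2) * Real.sqrt (Real.pi * d ^ n / (2 * A)))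
    (hii : ∀ d : ℝ, 0 < d →
      ((N d : ℂ)) ^ 2 =
        ((c ^ ((1 : ℝ) / 5) / 4 : ℝ) : ℂ) * ((d ^ (2 * σ - 9 / 10) : ℝ) : ℂ) *
          (Real.pi : ℂ) * ((d ^ n : ℝ) : ℂ) / ((A : ℂ) + (B : ℂ) * Complex.I)) :
    B = 0 ∧ A = (Real.pi / 2) * c ^ ((2 : ℝ) / 5) ∧
      σ = (1 / 4) * (9 / 5 - n) ∧ σ > 1 / 5 := by
  have hπ := Real.pi_pos
  have hc15 : (0:ℝ) < c ^ ((1:ℝ)/5) := Real.rpow_pos_of_pos hc _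
  -- B = 0
  have hz : ((A : ℂ) + (B : ℂ) * Complex.I) ≠ 0 := by
    intro h
    have : A = 0 := by
      have := congrArg Complex.re h
      simpa using this
    linarith
  have hB : B = 0 := by
    have h1 := hii 1 one_pos
    have hN1 : (0:ℝ) < N 1 := hNpos 1 one_pos
    have hN1sq : (0:ℝ) < (N 1)^2 := by positivity
    have hNz : ((N 1 : ℂ))^2 ≠ 0 := by
      exact_mod_cast pow_ne_zero 2 (by exact_mod_cast hN1.ne' : (N 1 : ℂ) ≠ 0)
    rw [Real.one_rpow, Real.one_rpow] at h1
    have hzeq : ((A : ℂ) + (B : ℂ) * Complex.I) =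
        ((c ^ ((1 : ℝ) / 5) / 4 : ℝ) : ℂ) * 1 * (Real.pi : ℂ) * 1 / ((N 1 : ℂ))^2 := by
      rw [eq_div_iff hz] at h1
      rw [eq_div_iff hNz]
      push_cast at h1 ⊢
      linear_combination h1
    have := congrArg Complex.im hzeq
    simp [Complex.div_im, ← Complex.ofReal_pow] at this
    simpa using this
  subst hB
  -- real version of (ii)
  have hiiR : ∀ d : ℝ, 0 < d →
      (N d)^2 = c ^ ((1:ℝ)/5) / 4 * d ^ (2*σ - 9/10) * Real.pi * d ^ n / A := by
    intro d hd
    have h := hii d hd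
    rw [Complex.ofReal_zero, zero_mul, add_zero] at h
    have : ((N d)^2 : ℂ) =
        ((c ^ ((1:ℝ)/5) / 4 * d ^ (2*σ - 9/10) * Real.pi * d ^ n / A : ℝ) : ℂ) := by
      push_cast
      rw [h]
      push_cast
      ring
    exact_mod_cast this
  -- combined equation
  have key : ∀ d : ℝ, 0 < d →
      (1/2) * Real.sqrt (Real.pi / (2*A)) * d ^ (n/2) =
        c ^ ((1:ℝ)/5) / 4 * Real.pi / A * d ^ (2*σ - 9/10 + n) := by
    intro d hd
    have h1 := hi d hd
    have h2 := hiiR d hd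
    have hsq : Real.sqrt (Real.pi * d ^ n / (2*A)) =
        Real.sqrt (Real.pi / (2*A)) * d ^ (n/2) := by
      have hdn : (0:ℝ) ≤ d ^ n := (Real.rpow_pos_of_pos hd n).le
      rw [show Real.pi * d ^ n / (2*A) = (Real.pi / (2*A)) * d ^ n by ring,
        Real.sqrt_mul (by positivity), show n/2 = n * (1/2) by ring,
        Real.rpow_mul hd.le, ← Real.sqrt_eq_rpow]
    rw [hsq] at h1
    rw [Real.rpow_add hd]
    linear_combination h2 - h1
  -- evaluate at d = 1
  have k1 := key 1 one_pos
  rw [Real.one_rpow, Real.one_rpow, mul_one] at k1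
  -- A value
  have hsqrtpos : (0:ℝ) < Real.sqrt (Real.pi / (2*A)) := Real.sqrt_pos.mpr (by positivity)
  have hsq2 : (Real.sqrt (Real.pi / (2*A)))^2 = Real.pi / (2*A) :=
    Real.sq_sqrt (by positivity)
  have hAval : A = (Real.pi / 2) * c ^ ((2:ℝ)/5) := by
    have h : (1/2 * Real.sqrt (Real.pi/(2*A)))^2 = (c^((1:ℝ)/5)/4*Real.pi/A)^2 := by
      rw [k1]; ring
    rw [mul_pow, hsq2] at h
    have hc25 : c ^ ((2:ℝ)/5) = (c ^ ((1:ℝ)/5))^2 := by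
      rw [← Real.rpow_natCast (c ^ ((1:ℝ)/5)) 2, ← Real.rpow_mul hc.le]
      norm_num
    rw [hc25]
    have hA' : A ≠ 0 := hA.ne'
    field_simp at h
    have h2 : (8*Real.pi*A) * (2*A) = (8*Real.pi*A) * ((c^((1:ℝ)/5))^2 * Real.pi) := by
      linear_combination (Real.pi * A) * h
    have h3 := mul_left_cancel₀ (by positivity : (8*Real.pi*A) ≠ 0) h2
    linear_combination h3 / 2
  -- σ value
  have hσ : σ = (1/4) * (9/5 - n) := by
    have ke := key (Real.exp 1) (Real.exp_pos 1)
    rw [Real.exp_one_rpow, Real.exp_one_rpow, k1] at ke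
    have hA' : A ≠ 0 := hA.ne'
    field_simp at ke
    rw [Real.exp_eq_exp] at ke
    linarith
  exact ⟨rfl, hAval, hσ, by rw [hσ]; linarith⟩
end
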